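/- arXiv:1012.3182 — 7 statements merged into one kernel-verified Lean document; each statement's English description precedes it below -/
import Mathlib

section
/- Let L ⊂ ℤⁿ be a k-dimensional lattice (a discrete subgroup of ℤⁿ of rank k). Then the k-th successive minimum of the unit Euclidean ball with respect to L satisfies λ_k(B, L) ≤ √n · det(L). -/
noncomputable section

open scoped BigOperators RealInnerProductSpace Pointwise

instance (k : ℕ) : WellFoundedLT (Fin k) := inferInstance

/-- Pack a plain vector into `EuclideanSpace`. -/
def toE {n : ℕ} (x : Fin n → ℝ) : EuclideanSpace ℝ (Fin n) := (WithLp.equiv 2 _).symm x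

/-- `det(L)` for the lattice with basis `b`: the square root of the Gram determinant,
i.e. the `k`-volume of the fundamental parallelepiped. -/
def latticeDet {n k : ℕ} (b : Fin k → EuclideanSpace ℝ (Fin n)) : ℝ :=
  Real.sqrt (Matrix.det (Matrix.of fun i j : Fin k => (⟪b i, b j⟫ : ℝ)))

/-- `λ_i(B, L)`: the `i`-th successive minimum (1-based) of the unit Euclidean ball with
respect to the lattice generated over `ℤ` by `b`. -/
def succMin {n k : ℕ} (b : Fin k → EuclideanSpace ℝ (Fin n)) (i : ℕ) : ℝ :=
  sInf {lam : ℝ | 0 < lam ∧ ∃ v : Fin i → EuclideanSpace ℝ (Fin n),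
    (∀ j, v j ∈ Submodule.span ℤ (Set.range b)) ∧ LinearIndependent ℝ v ∧ ∀ j, ‖v j‖ ≤ lam}

/-- `λ_i(K, L)` for a general `0`-symmetric convex body `K`. -/
def succMinSet {n k : ℕ} (K : Set (EuclideanSpace ℝ (Fin n)))
    (b : Fin k → EuclideanSpace ℝ (Fin n)) (i : ℕ) : ℝ :=
  sInf {lam : ℝ | 0 < lam ∧ ∃ v : Fin i → EuclideanSpace ℝ (Fin n),
    (∀ j, v j ∈ Submodule.span ℤ (Set.range b)) ∧ LinearIndependent ℝ v ∧ ∀ j, v j ∈ lam • K}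

/-- Gram–Schmidt coefficients `μ_{ij} = ⟪b_i, b̂_j⟫ / ‖b̂_j‖²`. -/
def gsMu {n k : ℕ} (b : Fin k → EuclideanSpace ℝ (Fin n)) (i j : Fin k) : ℝ :=
  ⟪b i, InnerProductSpace.gramSchmidt ℝ b j⟫ / ‖InnerProductSpace.gramSchmidt ℝ b j‖ ^ 2

/-- A basis is LLL-reduced if it is size-reduced and satisfies the Lovász condition. -/
def IsLLLReduced {n k : ℕ} (b : Fin k → EuclideanSpace ℝ (Fin n)) : Prop :=
  (∀ i j : Fin k, j < i → |gsMu b i j| ≤ 1 / 2) ∧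
  (∀ i j : Fin k, (j : ℕ) + 1 = (i : ℕ) →
    3 / 4 * ‖InnerProductSpace.gramSchmidt ℝ b j‖ ^ 2 ≤
      ‖InnerProductSpace.gramSchmidt ℝ b i‖ ^ 2 + gsMu b i j ^ 2 * ‖InnerProductSpace.gramSchmidt ℝ b j‖ ^ 2)

/-- The Hermite constant `γ_k`: the supremum over full-rank lattices in `ℝ^k` of
`λ₁(B,L)² / (det L)^{2/k}`. -/
def hermiteConstant (k : ℕ) : ℝ :=
  sSup {r : ℝ | ∃ b : Fin k → EuclideanSpace ℝ (Fin k), LinearIndependent ℝ b ∧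
    r = succMin b 1 ^ 2 / latticeDet b ^ ((2 : ℝ) / k)}

/-- `x ∈ ℤⁿ`. -/
def IsIntegerVec {n : ℕ} (x : EuclideanSpace ℝ (Fin n)) : Prop :=
  ∀ j, ∃ z : ℤ, x j = (z : ℝ)

/-- The greatest common divisor of all `m × m` minors of an `m × n` integer matrix. -/
def minorGcd {m n : ℕ} (A : Matrix (Fin m) (Fin n) ℤ) : ℤ :=
  Finset.gcd (Finset.univ.filter fun s : Finset (Fin n) => s.card = m)
    fun s => if h : s.card = m then
      (A.submatrix id fun j => ((s.orderIsoOfFin h) j : Fin n)).det else 0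

/-- `c` is a `ℤ`-basis of the lattice `L_A^⊥ = {x ∈ ℤⁿ : A x = 0}`. -/
def IsKernelZBasis {m n k : ℕ} (A : Matrix (Fin m) (Fin n) ℤ)
    (c : Fin k → EuclideanSpace ℝ (Fin n)) : Prop :=
  LinearIndependent ℝ c ∧ (∀ i, IsIntegerVec (c i)) ∧
  (∀ i, (A.map (Int.cast : ℤ → ℝ)).mulVec (fun j => c i j) = 0) ∧
  (∀ x : Fin n → ℤ, A.mulVec x = 0 →
    toE (fun j => (x j : ℝ)) ∈ Submodule.span ℤ (Set.range c))

/-- The cone `C` generated by the columns of `A`. -/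
def colCone {m n : ℕ} (A : Matrix (Fin m) (Fin n) ℤ) : Set (Fin m → ℝ) :=
  {y | ∃ μ : Fin n → ℝ, (∀ i, 0 ≤ μ i) ∧ y = ∑ i, μ i • fun r => (A r i : ℝ)}

/-- `v = v₁ + ⋯ + v_n`, the sum of the columns of `A` (as a real vector). -/
def colSum {m n : ℕ} (A : Matrix (Fin m) (Fin n) ℤ) : Fin m → ℝ :=
  fun r => ∑ i, (A r i : ℝ)


open Matrix

/-- Eigenvalue-based: `1 ≤ det (1 + C)` for `C` positive semidefinite. -/
lemma aux_one_le_det_one_add {m : ℕ} {C : Matrix (Fin m) (Fin m) ℝ} (hC : C.PosSemidef) :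
    1 ≤ (1 + C).det := by
  have hM : (1 + C).IsHermitian := Matrix.isHermitian_one.add hC.1
  have key : ∀ i, 1 ≤ hM.eigenvalues i := by
    intro i
    have hv := hM.mulVec_eigenvectorBasis i
    set μ := hM.eigenvalues i with hμ
    set v : Fin m → ℝ := ⇑(hM.eigenvectorBasis i) with hvdef
    have hv0 : v ≠ 0 := by
      intro h
      apply hM.eigenvectorBasis.orthonormal.ne_zero i
      ext j
      exact congrFun h j
    have hCv : C *ᵥ v = (μ - 1) • v := by
      have h1 : (1 + C) *ᵥ v = v + C *ᵥ v := by rw [Matrix.add_mulVec, Matrix.one_mulVec]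
      have h2 : v + C *ᵥ v = μ • v := by rw [← h1]; exact hv
      have : C *ᵥ v = μ • v - v := by rw [← h2]; abel
      rw [this, sub_smul, one_smul]
    have hquad := hC.dotProduct_mulVec_nonneg v
    rw [hCv] at hquad
    have hst : star v = v := by simp
    rw [hst, dotProduct_smul, smul_eq_mul] at hquad
    have hpos : 0 < dotProduct v v := by
      simpa [hst] using (dotProduct_star_self_pos_iff (v := v)).2 hv0
    nlinarith [hquad, hpos]
  have hprod : (1:ℝ) ≤ ∏ i, hM.eigenvalues i := by
    calc (1:ℝ) = ∏ _i : Fin m, 1 := by simp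
    _ ≤ ∏ i, hM.eigenvalues i := by
        apply Finset.prod_le_prod
        · intro i _; exact zero_le_one
        · intro i _; exact key i
  rw [hM.det_eq_prod_eigenvalues]
  simpa using hprod

open scoped MatrixOrder in
/-- Determinant monotonicity: `det A ≤ det (A + B)` for `A` posdef, `B` PSD. -/
lemma aux_det_le_det_add {m : ℕ} {A B : Matrix (Fin m) (Fin m) ℝ}
    (hA : A.PosDef) (hB : B.PosSemidef) : A.det ≤ (A + B).det := by
  set S := CFC.sqrt A with hSdef
  have hS : S.PosSemidef := Matrix.nonneg_iff_posSemidef.1 (CFC.sqrt_nonneg A)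
  have hSS : S * S = A := CFC.sqrt_mul_sqrt_self A (Matrix.nonneg_iff_posSemidef.2 hA.posSemidef)
  have hdetA : 0 < A.det := hA.det_pos
  have hdetS : S.det * S.det = A.det := by
    rw [← Matrix.det_mul, hSS]
  have hSu : IsUnit S.det := by
    refine isUnit_iff_ne_zero.2 fun h => ?_
    rw [h, mul_zero] at hdetS; exact hdetA.ne hdetS
  have hSinv_herm : (S⁻¹).IsHermitian := hS.1.inv
  set C := S⁻¹ * B * S⁻¹ with hCdef
  have hC : C.PosSemidef := by
    have := hB.mul_mul_conjTranspose_same S⁻¹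
    rwa [hSinv_herm.eq] at this
  have h1 : S * S⁻¹ = 1 := Matrix.mul_nonsing_inv _ hSu
  have h2 : S⁻¹ * S = 1 := Matrix.nonsing_inv_mul _ hSu
  have key : A + B = S * (1 + C) * S := by
    have : S * (1 + C) * S = S * S + S * (S⁻¹ * B * S⁻¹) * S := by
      rw [Matrix.mul_add, Matrix.mul_one, Matrix.add_mul]
    have hX : S * (S⁻¹ * B * S⁻¹) * S = B := by
      calc S * (S⁻¹ * B * S⁻¹) * S = (S * S⁻¹) * B * (S⁻¹ * S) := by
            simp only [Matrix.mul_assoc]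
      _ = B := by rw [h1, h2, Matrix.one_mul, Matrix.mul_one]
    rw [this, hSS, hX]
  have hdet1 : 1 ≤ (1 + C).det := aux_one_le_det_one_add hC
  rw [key, Matrix.det_mul, Matrix.det_mul]
  calc A.det = A.det * 1 := (mul_one _).symm
  _ ≤ A.det * (1 + C).det := by
      exact mul_le_mul_of_nonneg_left hdet1 hdetA.le
  _ = S.det * (1 + C).det * S.det := by rw [← hdetS]; ring


/-- Any (generalized) `k × k` minor of `B` is bounded: `det(B ∘ g)² ≤ det (Bᵀ B)`. -/
lemma aux_sq_det_submatrix_le {n k : ℕ} (B : Matrix (Fin n) (Fin k) ℝ)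
    (hG : (Bᵀ * B).PosDef) (g : Fin k → Fin n) :
    (B.submatrix g id).det ^ 2 ≤ (Bᵀ * B).det := by
  by_cases hg : Function.Injective g
  · by_cases hd : (B.submatrix g id).det = 0
    · rw [hd]
      simpa using hG.det_pos.le
    · set D := B.submatrix g id with hDdef
      have hDu : IsUnit D.det := isUnit_iff_ne_zero.2 hd
      have hDD : (Dᵀ * D).PosDef := by
        refine Matrix.PosDef.of_dotProduct_mulVec_pos (posSemidef_conjTranspose_mul_self D).1
          fun x hx => ?_
        have hDx : D *ᵥ x ≠ 0 := by
          intro h0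
          apply hx
          have : D⁻¹ *ᵥ (D *ᵥ x) = x := by
            rw [Matrix.mulVec_mulVec, Matrix.nonsing_inv_mul _ hDu, Matrix.one_mulVec]
          rw [h0, Matrix.mulVec_zero] at this
          exact this.symm
        have hrw : dotProduct (star x) ((Dᵀ * D) *ᵥ x) = dotProduct (star (D *ᵥ x)) (D *ᵥ x) := by
          rw [star_trivial, star_trivial, ← Matrix.mulVec_mulVec, dotProduct_mulVec,
            Matrix.vecMul_transpose]
        rw [hrw]
        exact dotProduct_star_self_pos_iff.2 hDx
      -- the complement part
      set c : Finset (Fin n) := (Finset.univ.image g)ᶜ with hcdef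
      set F : Matrix (Fin n) (Fin k) ℝ := Matrix.of fun j q => if j ∈ c then B j q else 0
        with hFdef
      have hE : (Fᵀ * F).PosSemidef := posSemidef_conjTranspose_mul_self F
      have hsplit : Bᵀ * B = Dᵀ * D + Fᵀ * F := by
        ext p q
        simp only [hDdef, hFdef]
        simp only [Matrix.mul_apply, Matrix.add_apply, Matrix.transpose_apply,
          Matrix.submatrix_apply, id_eq, Matrix.of_apply, hFdef]
        have h1 : ∑ l : Fin k, B (g l) p * B (g l) q
            = ∑ j ∈ Finset.univ.image g, B j p * B j q := by
          rw [Finset.sum_image (fun a _ b _ h => hg h)]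
        have h2 : ∑ j : Fin n, (if j ∈ c then B j p else 0) * (if j ∈ c then B j q else 0)
            = ∑ j ∈ c, B j p * B j q := by
          have hpt : ∀ j, (if j ∈ c then B j p else 0) * (if j ∈ c then B j q else 0)
              = if j ∈ c then B j p * B j q else 0 := by
            intro j; split <;> simp
          rw [Finset.sum_congr rfl fun j _ => hpt j, Finset.sum_ite_mem, Finset.univ_inter]
        rw [h1, h2, hcdef, Finset.sum_add_sum_compl]
      calc D.det ^ 2 = (Dᵀ * D).det := by rw [Matrix.det_mul, Matrix.det_transpose, sq]
      _ ≤ (Dᵀ * D + Fᵀ * F).det := aux_det_le_det_add hDD hE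
      _ = (Bᵀ * B).det := by rw [hsplit]
  · obtain ⟨p₁, p₂, heq, hne⟩ : ∃ p₁ p₂, g p₁ = g p₂ ∧ p₁ ≠ p₂ := by
      simp only [Function.Injective, not_forall] at hg
      obtain ⟨a, b, h, h'⟩ := hg
      exact ⟨a, b, h, h'⟩
    have hd : (B.submatrix g id).det = 0 := by
      apply Matrix.det_zero_of_row_eq hne
      ext q
      simp [Matrix.submatrix_apply, heq]
    rw [hd]
    simpa using hG.det_pos.le

/-- Select rows of `B` forming an invertible `k × k` matrix. -/
lemma aux_exists_rows {n k : ℕ} (B : Matrix (Fin n) (Fin k) ℝ)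
    (hB : LinearIndependent ℝ Bᵀ) :
    ∃ s : Fin k → Fin n, IsUnit (B.submatrix s id).det := by
  have hrankT : Bᵀ.rank = k := by
    rw [LinearIndependent.rank_matrix (M := Bᵀ) hB]; exact Fintype.card_fin k
  have hrank : B.rank = k := by rw [← Matrix.rank_transpose, hrankT]
  have hspan : Submodule.span ℝ (Set.range B) = ⊤ := by
    apply Submodule.eq_top_of_finrank_eq
    change Module.finrank ℝ (Submodule.span ℝ (Set.range B.row)) = _
    rw [← Matrix.rank_eq_finrank_span_row, hrank,
      Module.finrank_fintype_fun_eq_card, Fintype.card_fin]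
  obtain ⟨t, hts, htspan, htli⟩ := exists_linearIndependent ℝ (Set.range B)
  rw [hspan] at htspan
  have htfin : t.Finite := htli.setFinite
  haveI := htfin.fintype
  have hbasis : Fintype.card t = k := by
    let bas : Module.Basis t ℝ (Fin k → ℝ) := Module.Basis.mk htli (by rw [Subtype.range_coe, htspan])
    have := Module.finrank_eq_card_basis bas
    rw [Module.finrank_fintype_fun_eq_card, Fintype.card_fin] at this
    exact this.symm
  have hchoose : ∀ y : t, ∃ j : Fin n, B j = (y : Fin k → ℝ) := fun y => hts y.2
  choose j hj using hchoose
  let e : Fin k ≃ t := (Fintype.equivFinOfCardEq hbasis).symm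
  refine ⟨fun i => j (e i), ?_⟩
  rw [← Matrix.isUnit_iff_isUnit_det, ← Matrix.linearIndependent_rows_iff_isUnit]
  have heqrows : (fun i => (B.submatrix (fun i => j (e i)) id) i)
      = fun i => ((e i : Fin k → ℝ)) := by
    funext i
    exact hj (e i)
  change LinearIndependent ℝ (fun i => (B.submatrix (fun i => j (e i)) id) i)
  rw [heqrows]
  exact htli.comp (fun i => e i) e.injective

section main
variable {n k : ℕ} (b : Fin k → EuclideanSpace ℝ (Fin n))

/-- The coordinate matrix: `Bmat b j q = b q j`. -/
def Bmat : Matrix (Fin n) (Fin k) ℝ := Matrix.of fun j q => b q j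

lemma gram_eq : (Matrix.of fun i j : Fin k => (⟪b i, b j⟫ : ℝ)) = (Bmat b)ᵀ * Bmat b := by
  ext p q
  simp [Bmat, Matrix.mul_apply, PiLp.inner_apply, RCLike.inner_apply, conj_trivial, mul_comm]

lemma bmat_transpose_li (hb : LinearIndependent ℝ b) : LinearIndependent ℝ (Bmat b)ᵀ := by
  have : (Bmat b)ᵀ = fun q => (WithLp.equiv 2 (Fin n → ℝ)) (b q) := rfl
  rw [this]
  exact hb.map' (WithLp.linearEquiv 2 ℝ (Fin n → ℝ)).toLinearMap
    (LinearEquiv.ker _)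

lemma gram_posDef (hb : LinearIndependent ℝ b) : ((Bmat b)ᵀ * Bmat b).PosDef := by
  refine Matrix.PosDef.of_dotProduct_mulVec_pos (posSemidef_conjTranspose_mul_self (Bmat b)).1
    fun x hx => ?_
  have hBx : Bmat b *ᵥ x ≠ 0 := by
    intro h0
    apply hx
    have hsum : ∑ q, x q • b q = 0 := by
      apply (WithLp.linearEquiv 2 ℝ (Fin n → ℝ)).injective
      rw [map_sum, map_zero]
      funext j
      have : (∑ q, x q • (WithLp.linearEquiv 2 ℝ (Fin n → ℝ)) (b q)) j
          = ∑ q, x q * b q j := by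
        rw [Finset.sum_apply]
        simp [WithLp.linearEquiv]
      simp only [_root_.map_smul, this]
      have := congrFun h0 j
      simpa [Bmat, Matrix.mulVec, dotProduct, mul_comm] using this
    exact funext fun q => Fintype.linearIndependent_iff.1 hb x hsum q
  have hrw : dotProduct (star x) (((Bmat b)ᵀ * Bmat b) *ᵥ x)
      = dotProduct (star (Bmat b *ᵥ x)) (Bmat b *ᵥ x) := by
    rw [star_trivial, star_trivial, ← Matrix.mulVec_mulVec, dotProduct_mulVec,
      Matrix.vecMul_transpose]
  rw [hrw]
  exact dotProduct_star_self_pos_iff.2 hBx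

end main

/-- Lemma 4: for a `k`-dimensional lattice `L ⊂ ℤⁿ`,
`λ_k(B, L) ≤ √n · det(L)`. -/
theorem succMin_last_le_sqrt_mul_det {n k : ℕ} (b : Fin k → EuclideanSpace ℝ (Fin n))
    (hb : LinearIndependent ℝ b) (hint : ∀ i, IsIntegerVec (b i)) :
    succMin b k ≤ Real.sqrt n * latticeDet b := by
  rcases Nat.eq_zero_or_pos n with hn | hn
  · -- n = 0 forces k = 0
    subst hn
    have hk : k = 0 := by
      have h1 := hb.fintype_card_le_finrank
      simpa [finrank_euclideanSpace] using h1
    subst hk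
    have hset : {lam : ℝ | 0 < lam ∧ ∃ v : Fin 0 → EuclideanSpace ℝ (Fin 0),
        (∀ j, v j ∈ Submodule.span ℤ (Set.range b)) ∧ LinearIndependent ℝ v ∧
        ∀ j, ‖v j‖ ≤ lam} = Set.Ioi 0 := by
      ext lam
      simp only [Set.mem_setOf_eq, Set.mem_Ioi]
      constructor
      · exact fun h => h.1
      · intro h
        exact ⟨h, Fin.elim0, fun j => j.elim0, linearIndependent_empty_type, fun j => j.elim0⟩
    rw [succMin, hset, csInf_Ioi]
    exact mul_nonneg (Real.sqrt_nonneg _) (Real.sqrt_nonneg _)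
  · -- main case
    set B := Bmat b with hBdef
    have hGpd : (Bᵀ * B).PosDef := gram_posDef b hb
    obtain ⟨s, hsu⟩ := aux_exists_rows B (bmat_transpose_li b hb)
    set N : Matrix (Fin k) (Fin k) ℝ := B.submatrix s id with hNdef
    set A : Matrix (Fin k) (Fin k) ℝ := N.adjugate with hAdef
    set w : Fin k → EuclideanSpace ℝ (Fin n) := fun i => ∑ q, A q i • b q with hwdef
    set G : ℝ := (Bᵀ * B).det with hGdef
    have hGpos : 0 < G := hGpd.det_pos
    -- coordinates of w
    have hcoord : ∀ i j, w i j = (B.submatrix (Function.update s i j) id).det := by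
      intro i j
      have h1 : w i j = ∑ q, A q i * b q j := by
        have : (WithLp.linearEquiv 2 ℝ (Fin n → ℝ)) (w i) j = ∑ q, A q i * b q j := by
          rw [hwdef]
          simp only [map_sum, _root_.map_smul]
          rw [Finset.sum_apply]
          simp [WithLp.linearEquiv]
        exact this
      rw [h1]
      set r : Fin k → ℝ := fun q => b q j with hrdef
      have h2 : ∑ q, A q i * r q = (Nᵀ.adjugate *ᵥ r) i := by
        rw [← Matrix.adjugate_transpose]
        simp [Matrix.mulVec, dotProduct, Matrix.transpose_apply, hAdef]
      have h3 : (Nᵀ.adjugate *ᵥ r) i = (Nᵀ.cramer r) i := by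
        rw [Matrix.cramer_eq_adjugate_mulVec]
      have h4 : (Nᵀ.cramer r) i = (Nᵀ.updateCol i r).det := Matrix.cramer_apply _ _ _
      have h5 : (Nᵀ.updateCol i r) = (N.updateRow i r)ᵀ :=
        Matrix.updateCol_transpose
      have h6 : N.updateRow i r = B.submatrix (Function.update s i j) id := by
        ext p q
        rcases eq_or_ne p i with rfl | hpi
        · simp [Matrix.updateRow_self, hrdef, Function.update_self, hBdef, Bmat]
        · simp [Matrix.updateRow_ne hpi, hNdef, Function.update_of_ne hpi, hBdef, Bmat]
      rw [h2, h3, h4, h5, Matrix.det_transpose, h6]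
    -- norm bound
    have hnormw : ∀ i, ‖w i‖ ≤ Real.sqrt n * Real.sqrt G := by
      intro i
      rw [EuclideanSpace.norm_eq]
      rw [← Real.sqrt_mul (by positivity : (0:ℝ) ≤ (n:ℝ))]
      apply Real.sqrt_le_sqrt
      have hbd : ∀ j, ‖w i j‖ ^ 2 ≤ G := by
        intro j
        rw [hcoord i j, Real.norm_eq_abs, sq_abs]
        exact aux_sq_det_submatrix_le B hGpd _
      calc ∑ j, ‖w i j‖ ^ 2 ≤ ∑ _j : Fin n, G := Finset.sum_le_sum fun j _ => hbd j
      _ = n * G := by simp [Finset.sum_const, nsmul_eq_mul]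
    -- integrality: w i ∈ span ℤ (range b)
    have hmem : ∀ i, w i ∈ Submodule.span ℤ (Set.range b) := by
      intro i
      choose z hz using fun q => hint q
      set Nz : Matrix (Fin k) (Fin k) ℤ := Matrix.of fun p q => z q (s p) with hNzdef
      have hNmap : N = Nz.map (Int.cast : ℤ → ℝ) := by
        ext p q
        simp [hNdef, hBdef, Bmat, hNzdef, Matrix.map_apply, hz q (s p)]
      have hAmap : A = (Nz.adjugate).map (Int.cast : ℤ → ℝ) := by
        rw [hAdef, hNmap]
        simpa only [RingHom.mapMatrix_apply, Int.coe_castRingHom] using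
          (RingHom.map_adjugate (Int.castRingHom ℝ) Nz).symm
      rw [hwdef]
      apply Submodule.sum_mem
      intro q _
      have : A q i • b q = (Nz.adjugate q i : ℤ) • b q := by
        rw [hAmap]
        simp only [Matrix.map_apply]
        rw [Int.cast_smul_eq_zsmul]
      rw [this]
      exact Submodule.smul_mem _ _ (Submodule.subset_span (Set.mem_range_self q))
    -- linear independence of w
    have hli : LinearIndependent ℝ w := by
      rw [Fintype.linearIndependent_iff]
      intro c hc
      have hswap : ∑ i, c i • w i = ∑ q, (A *ᵥ c) q • b q := by
        rw [hwdef]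
        simp only [Finset.smul_sum, smul_smul]
        rw [Finset.sum_comm]
        apply Finset.sum_congr rfl
        intro q _
        rw [Matrix.mulVec, ← Finset.sum_smul]
        congr 1
        simp [dotProduct, mul_comm]
      rw [hswap] at hc
      have hAc : A *ᵥ c = 0 :=
        funext fun q => Fintype.linearIndependent_iff.1 hb _ hc q
      have hNc : N.det • c = 0 := by
        have h1 : (N * A) *ᵥ c = N.det • c := by
          rw [hAdef, Matrix.mul_adjugate, Matrix.smul_mulVec, Matrix.one_mulVec]
        rw [← Matrix.mulVec_mulVec, hAc, Matrix.mulVec_zero] at h1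
        exact h1.symm
      have hc0 : c = 0 := by
        rcases smul_eq_zero.1 hNc with h | h
        · exact absurd h (isUnit_iff_ne_zero.1 hsu)
        · exact h
      exact fun i => congrFun hc0 i
    -- conclusion
    have hlatdet : latticeDet b = Real.sqrt G := by
      rw [latticeDet, gram_eq b, hGdef]
    have htarget : 0 < Real.sqrt n * latticeDet b := by
      rw [hlatdet]
      have : (0:ℝ) < n := by exact_mod_cast hn
      positivity
    apply csInf_le
    · exact ⟨0, fun lam hlam => hlam.1.le⟩
    · refine ⟨htarget, w, hmem, hli, fun i => ?_⟩
      rw [hlatdet]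
      exact hnormw i

end
end

section
/- Let b₁, …, b_k be a basis of a lattice L in ℝⁿ with Gram–Schmidt orthogonalization b̂₁, …, b̂_k. Then for each i = 1, …, k, the i-th successive minimum of the unit ball with respect to L satisfies λ_i ≥ min_{j = i, i+1, …, k} ‖b̂_j‖. -/
noncomputable section

open scoped BigOperators RealInnerProductSpace Pointwise

/-- Lemma 1: `λ_i ≥ min_{j = i, …, k} ‖b̂_j‖`. -/
theorem succMin_ge_min_gramSchmidt_norm {n k : ℕ} (b : Fin k → EuclideanSpace ℝ (Fin n))
    (hb : LinearIndependent ℝ b) (i : Fin k) :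
    (Finset.univ.filter fun j : Fin k => i ≤ j).inf' ⟨i, by simp⟩
        (fun j => ‖InnerProductSpace.gramSchmidt ℝ b j‖) ≤ succMin b ((i : ℕ) + 1) := by
  classical
  have hkey : ∀ j : Fin k, ⟪InnerProductSpace.gramSchmidt ℝ b j, b j⟫ = ‖InnerProductSpace.gramSchmidt ℝ b j‖ ^ 2 := by
    intro j
    conv_lhs => rw [InnerProductSpace.gramSchmidt_def'' ℝ b j]
    rw [inner_add_right, inner_sum, real_inner_self_eq_norm_sq]
    rw [Finset.sum_eq_zero, add_zero]
    intro l hl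
    rw [inner_smul_right, InnerProductSpace.gramSchmidt_orthogonal ℝ b (Finset.mem_Iio.mp hl).ne', mul_zero]
  apply le_csInf
  · -- the defining set of `succMin` is nonempty
    refine ⟨max 1 ((Finset.univ : Finset (Fin ((i : ℕ) + 1))).sup'
        ⟨0, Finset.mem_univ _⟩ fun t => ‖b (Fin.castLE i.isLt t)‖), ?_,
      fun t => b (Fin.castLE i.isLt t), ?_, ?_, ?_⟩
    · exact lt_of_lt_of_le one_pos (le_max_left _ _)
    · intro t
      exact Submodule.subset_span ⟨Fin.castLE i.isLt t, rfl⟩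
    · exact hb.comp _ (Fin.castLE_injective _)
    · intro t
      exact le_trans (Finset.le_sup' (fun t => ‖b (Fin.castLE i.isLt t)‖)
        (Finset.mem_univ t)) (le_max_right _ _)
  · rintro lam ⟨hlam, v, hin, hli, hle⟩
    choose z hz using fun t => (Submodule.mem_span_range_iff_exists_fun ℤ).mp (hin t)
    have hz' : ∀ t, (∑ l, ((z t l : ℝ)) • b l) = v t := by
      intro t
      rw [← hz t]
      simp [Int.cast_smul_eq_zsmul]
    -- some vector has a nonzero coefficient at an index ≥ i
    have hex : ∃ t, ∃ j : Fin k, i ≤ j ∧ z t j ≠ 0 := by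
      by_contra h
      push_neg at h
      set f : Fin (i : ℕ) → EuclideanSpace ℝ (Fin n) :=
        fun l => b (Fin.castLE i.isLt.le l) with hf
      have hmem : ∀ t, v t ∈ Submodule.span ℝ (Set.range f) := by
        intro t
        rw [← hz' t]
        refine Submodule.sum_mem _ fun l _ => ?_
        by_cases hl : i ≤ l
        · simp [h t l hl]
        · refine Submodule.smul_mem _ _ (Submodule.subset_span ?_)
          refine ⟨⟨(l : ℕ), ?_⟩, ?_⟩
          · exact_mod_cast not_le.mp hl
          · simp [hf, Fin.castLE]
      have hli2 : LinearIndependent ℝ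
          (fun t => (⟨v t, hmem t⟩ : Submodule.span ℝ (Set.range f))) := by
        apply LinearIndependent.of_comp (Submodule.span ℝ (Set.range f)).subtype
        exact hli
      have h1 := hli2.fintype_card_le_finrank
      have h2 : Module.finrank ℝ (Submodule.span ℝ (Set.range f)) ≤ (i : ℕ) := by
        simpa [Set.finrank] using finrank_range_le_card (R := ℝ) f
      simp only [Fintype.card_fin] at h1
      omega
    obtain ⟨t, j, hij, hzne⟩ := hex
    set S : Finset (Fin k) := Finset.univ.filter fun l => z t l ≠ 0 with hSdef
    have hS : S.Nonempty := ⟨j, by simp [hSdef, hzne]⟩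
    set j₀ := S.max' hS with hj₀
    have hj₀i : i ≤ j₀ := hij.trans (S.le_max' j (by simp [hSdef, hzne]))
    have hz₀ : z t j₀ ≠ 0 := by
      have := S.max'_mem hS
      simpa [hSdef] using this
    have htop : ∀ l, j₀ < l → z t l = 0 := by
      intro l hl
      by_contra hc
      exact absurd (S.le_max' l (by simp [hSdef, hc])) (not_le.mpr hl)
    have hinner : ⟪InnerProductSpace.gramSchmidt ℝ b j₀, v t⟫ = (z t j₀ : ℝ) * ‖InnerProductSpace.gramSchmidt ℝ b j₀‖ ^ 2 := by
      rw [← hz' t, inner_sum]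
      rw [Finset.sum_eq_single j₀]
      · rw [inner_smul_right, hkey]
      · intro l _ hne
        rcases lt_or_gt_of_ne hne with hlt | hgt
        · rw [inner_smul_right, InnerProductSpace.gramSchmidt_inv_triangular ℝ b hlt, mul_zero]
        · simp [htop l hgt]
      · intro habs
        exact absurd (Finset.mem_univ j₀) habs
    have hne0 : InnerProductSpace.gramSchmidt ℝ b j₀ ≠ 0 := InnerProductSpace.gramSchmidt_ne_zero _ hb
    have hpos : 0 < ‖InnerProductSpace.gramSchmidt ℝ b j₀‖ := norm_pos_iff.mpr hne0
    have hCS : |⟪InnerProductSpace.gramSchmidt ℝ b j₀, v t⟫| ≤ ‖InnerProductSpace.gramSchmidt ℝ b j₀‖ * ‖v t‖ :=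
      abs_real_inner_le_norm _ _
    have h1z : (1 : ℝ) ≤ |(z t j₀ : ℝ)| := by
      exact_mod_cast Int.one_le_abs hz₀
    rw [hinner, abs_mul, abs_of_nonneg (by positivity : (0:ℝ) ≤ ‖InnerProductSpace.gramSchmidt ℝ b j₀‖ ^ 2)]
        at hCS
    have hnorm : ‖InnerProductSpace.gramSchmidt ℝ b j₀‖ ≤ ‖v t‖ := by nlinarith
    calc (Finset.univ.filter fun j : Fin k => i ≤ j).inf' ⟨i, by simp⟩
          (fun j => ‖InnerProductSpace.gramSchmidt ℝ b j‖)
        ≤ ‖InnerProductSpace.gramSchmidt ℝ b j₀‖ := Finset.inf'_le _ (by simp [hj₀i])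
      _ ≤ ‖v t‖ := hnorm
      _ ≤ lam := hle t

end
end

section
/- Let b₁, …, b_k be an LLL-reduced basis of a lattice L in ℝⁿ. Then for each 1 ≤ i ≤ k: ‖b_i‖² ≤ 2^{k−1} λ_i², where λ_i is the i-th successive minimum of the unit ball with respect to L. -/
noncomputable section

open scoped BigOperators RealInnerProductSpace Pointwise

open InnerProductSpace

variable {n k : ℕ} (b : Fin k → EuclideanSpace ℝ (Fin n))

lemma gs_expansion (i : Fin k) :
    b i = gramSchmidt ℝ b i + ∑ j ∈ Finset.Iio i, gsMu b i j • gramSchmidt ℝ b j := by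
  conv_lhs => rw [gramSchmidt_def'' ℝ b i]
  congr 1
  refine Finset.sum_congr rfl fun j hj => ?_
  rw [gsMu, real_inner_comm]
  norm_num

lemma inner_b_gs_zero {j l : Fin k} (h : j < l) : ⟪b j, gramSchmidt ℝ b l⟫ = 0 := by
  rw [real_inner_comm]; exact gramSchmidt_inv_triangular ℝ b h

lemma inner_b_gs_self (i : Fin k) : ⟪b i, gramSchmidt ℝ b i⟫ = ‖gramSchmidt ℝ b i‖ ^ 2 := by
  conv_lhs => rw [gs_expansion b i]
  rw [inner_add_left, sum_inner, real_inner_self_eq_norm_sq]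
  rw [Finset.sum_eq_zero, add_zero]
  intro j hj
  rw [real_inner_smul_left, gramSchmidt_orthogonal ℝ b (Finset.mem_Iio.1 hj).ne, mul_zero]

lemma norm_b_sq_eq (i : Fin k) :
    ‖b i‖ ^ 2 = ‖gramSchmidt ℝ b i‖ ^ 2
      + ∑ j ∈ Finset.Iio i, gsMu b i j ^ 2 * ‖gramSchmidt ℝ b j‖ ^ 2 := by
  set g := gramSchmidt ℝ b with hg
  set r := ∑ j ∈ Finset.Iio i, gsMu b i j • g j with hrdef
  have hr : ⟪g i, r⟫ = 0 := by
    rw [hrdef, inner_sum]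
    refine Finset.sum_eq_zero fun j hj => ?_
    rw [real_inner_smul_right, gramSchmidt_orthogonal ℝ b (Finset.mem_Iio.1 hj).ne', mul_zero]
  have hrr : ‖r‖ ^ 2 = ∑ j ∈ Finset.Iio i, gsMu b i j ^ 2 * ‖g j‖ ^ 2 := by
    rw [← real_inner_self_eq_norm_sq, hrdef, sum_inner]
    refine Finset.sum_congr rfl fun j hj => ?_
    rw [real_inner_smul_left, inner_sum, Finset.sum_eq_single_of_mem j hj]
    · rw [real_inner_smul_right, real_inner_self_eq_norm_sq]; ring
    · intro l hl hlj
      rw [real_inner_smul_right, gramSchmidt_orthogonal ℝ b (Ne.symm hlj), mul_zero]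
  calc ‖b i‖ ^ 2 = ‖g i + r‖ ^ 2 := by rw [← gs_expansion]
    _ = ‖g i‖ ^ 2 + 2 * ⟪g i, r⟫ + ‖r‖ ^ 2 := norm_add_sq_real _ _
    _ = _ := by rw [hr, hrr]; ring

lemma gs_step (hLLL : IsLLLReduced b) {j l : Fin k} (h : (j : ℕ) + 1 = l) :
    ‖gramSchmidt ℝ b j‖ ^ 2 ≤ 2 * ‖gramSchmidt ℝ b l‖ ^ 2 := by
  have h1 := hLLL.2 l j h
  have h2 := hLLL.1 l j (by rw [Fin.lt_def]; omega)
  have h3 := abs_le.1 h2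
  have hmu : gsMu b l j ^ 2 ≤ 1 / 4 := by nlinarith
  nlinarith [mul_le_mul_of_nonneg_right hmu (sq_nonneg ‖gramSchmidt ℝ b j‖)]

lemma gs_chain (hLLL : IsLLLReduced b) :
    ∀ d : ℕ, ∀ j l : Fin k, (j : ℕ) + d = l →
      ‖gramSchmidt ℝ b j‖ ^ 2 ≤ 2 ^ d * ‖gramSchmidt ℝ b l‖ ^ 2 := by
  intro d
  induction d with
  | zero => intro j l h; have : j = l := Fin.ext (by omega); simp [this]
  | succ d ih =>
    intro j l h
    have hl' : (j : ℕ) + d < k := by have := l.isLt; omega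
    set l' : Fin k := ⟨(j : ℕ) + d, hl'⟩ with hl'def
    have h1 := ih j l' rfl
    have h2 := gs_step b hLLL (j := l') (l := l) (by simp [hl'def]; omega)
    have hp : (0:ℝ) ≤ 2 ^ d := by positivity
    calc ‖gramSchmidt ℝ b j‖ ^ 2 ≤ 2 ^ d * ‖gramSchmidt ℝ b l'‖ ^ 2 := h1
      _ ≤ 2 ^ d * (2 * ‖gramSchmidt ℝ b l‖ ^ 2) := by nlinarith
      _ = 2 ^ (d + 1) * ‖gramSchmidt ℝ b l‖ ^ 2 := by ring

lemma normb_le_gs (hLLL : IsLLLReduced b) (i : Fin k) :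
    ‖b i‖ ^ 2 ≤ 2 ^ (i : ℕ) * ‖gramSchmidt ℝ b i‖ ^ 2 := by
  rw [norm_b_sq_eq]
  set g := gramSchmidt ℝ b with hg
  have hterm : ∀ j ∈ Finset.Iio i, gsMu b i j ^ 2 * ‖g j‖ ^ 2 ≤
      (1 / 4) * 2 ^ ((i : ℕ) - (j : ℕ)) * ‖g i‖ ^ 2 := by
    intro j hj
    have hji : j < i := Finset.mem_Iio.1 hj
    have h1 : gsMu b i j ^ 2 ≤ 1 / 4 := by
      have := abs_le.1 (hLLL.1 i j hji)
      nlinarith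
    have h2 : ‖g j‖ ^ 2 ≤ 2 ^ ((i : ℕ) - (j : ℕ)) * ‖g i‖ ^ 2 :=
      gs_chain b hLLL _ j i (by have := hji; rw [Fin.lt_def] at this; omega)
    have h3 : (0:ℝ) ≤ ‖g j‖ ^ 2 := sq_nonneg _
    have h4 : (0:ℝ) ≤ gsMu b i j ^ 2 := sq_nonneg _
    calc gsMu b i j ^ 2 * ‖g j‖ ^ 2 ≤ (1/4) * (2 ^ ((i:ℕ) - (j:ℕ)) * ‖g i‖ ^ 2) := by
          apply mul_le_mul h1 h2 h3 (by norm_num)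
      _ = _ := by ring
  have hsum := Finset.sum_le_sum hterm
  have himg : (Finset.Iio i).image Fin.val = Finset.range (i : ℕ) := by
    ext t
    simp only [Finset.mem_image, Finset.mem_Iio, Finset.mem_range, Fin.lt_def]
    constructor
    · rintro ⟨j, hj, rfl⟩; exact hj
    · intro ht; exact ⟨⟨t, lt_trans ht i.isLt⟩, ht, rfl⟩
  have hS : ∑ j ∈ Finset.Iio i, (1 / 4 : ℝ) * 2 ^ ((i : ℕ) - (j : ℕ)) * ‖g i‖ ^ 2
      = ∑ t ∈ Finset.range (i : ℕ), (1 / 4 : ℝ) * 2 ^ ((i : ℕ) - t) * ‖g i‖ ^ 2 := by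
    rw [← himg, Finset.sum_image]
    intro x _ y _ hxy; exact Fin.ext hxy
  have hgeom : ∑ t ∈ Finset.range (i : ℕ), (2:ℝ) ^ ((i : ℕ) - t) = 2 * (2 ^ (i:ℕ) - 1) := by
    rw [← Finset.sum_range_reflect (fun t => (2:ℝ) ^ ((i:ℕ) - t)) (i:ℕ)]
    have : ∀ t ∈ Finset.range (i : ℕ), (2:ℝ) ^ ((i:ℕ) - ((i:ℕ) - 1 - t)) = 2 * 2 ^ t := by
      intro t ht
      rw [Finset.mem_range] at ht
      have : (i:ℕ) - ((i:ℕ) - 1 - t) = t + 1 := by omega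
      rw [this, pow_succ]; ring
    rw [Finset.sum_congr rfl this, ← Finset.mul_sum, geom_sum_eq (by norm_num) (i:ℕ)]
    norm_num
  have hone : (1:ℝ) ≤ 2 ^ (i:ℕ) := one_le_pow₀ (by norm_num)
  have hg2 : (0:ℝ) ≤ ‖g i‖ ^ 2 := sq_nonneg _
  calc ‖g i‖ ^ 2 + ∑ j ∈ Finset.Iio i, gsMu b i j ^ 2 * ‖g j‖ ^ 2
      ≤ ‖g i‖ ^ 2 + ∑ t ∈ Finset.range (i : ℕ), (1 / 4 : ℝ) * 2 ^ ((i : ℕ) - t) * ‖g i‖ ^ 2 := by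
        rw [← hS]; linarith
    _ = ‖g i‖ ^ 2 + (1/4) * (∑ t ∈ Finset.range (i : ℕ), (2:ℝ) ^ ((i : ℕ) - t)) * ‖g i‖ ^ 2 := by
        simp only [Finset.mul_sum, Finset.sum_mul]
    _ = ‖g i‖ ^ 2 + (1/4) * (2 * (2 ^ (i:ℕ) - 1)) * ‖g i‖ ^ 2 := by rw [hgeom]
    _ ≤ 2 ^ (i : ℕ) * ‖g i‖ ^ 2 := by nlinarith


/-- Lemma 2, inequality (13): for an LLL-reduced basis,
`‖b_i‖² ≤ 2^{k−1} λ_i²`. -/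
theorem norm_sq_le_two_pow_mul_succMin_sq {n k : ℕ}
    (b : Fin k → EuclideanSpace ℝ (Fin n)) (hb : LinearIndependent ℝ b)
    (hLLL : IsLLLReduced b) (i : Fin k) :
    ‖b i‖ ^ 2 ≤ 2 ^ (k - 1) * succMin b ((i : ℕ) + 1) ^ 2 := by
  have hgne : ∀ j, gramSchmidt ℝ b j ≠ 0 := fun j => gramSchmidt_ne_zero j hb
  have hgpos : ∀ j : Fin k, 0 < ‖gramSchmidt ℝ b j‖ := fun j => norm_pos_iff.2 (hgne j)
  set T : Finset (Fin k) := Finset.univ.filter (fun j => i ≤ j) with hT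
  have hiT : i ∈ T := by simp [hT]
  have hTne : T.Nonempty := ⟨i, hiT⟩
  set m : ℝ := T.inf' hTne (fun j => ‖gramSchmidt ℝ b j‖) with hm
  obtain ⟨j₁, hj₁T, hj₁e⟩ := Finset.exists_mem_eq_inf' hTne (fun j => ‖gramSchmidt ℝ b j‖)
  have hij₁ : i ≤ j₁ := by simp [hT] at hj₁T; exact hj₁T
  have hmj : m = ‖gramSchmidt ℝ b j₁‖ := hj₁e
  have hmpos : 0 < m := hmj ▸ hgpos j₁
  -- key lower bound for every element of the defining set of `succMin`
  have hkey : ∀ lam ∈ {lam : ℝ | 0 < lam ∧ ∃ v : Fin ((i : ℕ) + 1) → EuclideanSpace ℝ (Fin n),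
      (∀ j, v j ∈ Submodule.span ℤ (Set.range b)) ∧ LinearIndependent ℝ v ∧ ∀ j, ‖v j‖ ≤ lam},
      m ≤ lam := by
    rintro lam ⟨hlam, v, hvL, hvi, hvn⟩
    set W : Submodule ℝ (EuclideanSpace ℝ (Fin n)) :=
      Submodule.span ℝ (Set.range (fun s : Fin (i : ℕ) => b (Fin.castLE i.isLt.le s))) with hW
    have hrank : Module.finrank ℝ W ≤ (i : ℕ) := by
      have h := finrank_range_le_card (R := ℝ) (fun s : Fin (i : ℕ) => b (Fin.castLE i.isLt.le s))
      simpa [Set.finrank] using h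
    have hex : ∃ t, v t ∉ W := by
      by_contra hall
      push_neg at hall
      have hli : LinearIndependent ℝ (fun t => (⟨v t, hall t⟩ : W)) := by
        refine LinearIndependent.of_comp W.subtype ?_
        exact hvi
      have hcard := hli.fintype_card_le_finrank
      rw [Fintype.card_fin] at hcard
      omega
    obtain ⟨t, htW⟩ := hex
    obtain ⟨z, hz⟩ := (Submodule.mem_span_range_iff_exists_fun ℤ).1 (hvL t)
    have hvt : v t = ∑ j, ((z j : ℝ)) • b j := by
      rw [← hz]
      exact Finset.sum_congr rfl fun j _ => (Int.cast_smul_eq_zsmul ℝ (z j) (b j)).symm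
    have hzi : ∃ j : Fin k, z j ≠ 0 ∧ i ≤ j := by
      by_contra hno
      push_neg at hno
      apply htW
      rw [hvt]
      apply Submodule.sum_mem
      intro j _
      by_cases hzj : z j = 0
      · simp [hzj]
      · have hj : (j : ℕ) < (i : ℕ) := by
          have := hno j hzj
          rw [Fin.lt_def] at this
          omega
        refine Submodule.smul_mem _ _ (Submodule.subset_span ⟨⟨(j : ℕ), hj⟩, ?_⟩)
        congr 1
    obtain ⟨ja, hja, hia⟩ := hzi
    set S : Finset (Fin k) := Finset.univ.filter (fun j => z j ≠ 0) with hSdef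
    have hSne : S.Nonempty := ⟨ja, by simp [hSdef, hja]⟩
    set j₀ := S.max' hSne with hj₀
    have hz₀ : z j₀ ≠ 0 := by
      have h := S.max'_mem hSne
      simp only [hSdef, Finset.mem_filter] at h
      exact h.2
    have hij₀ : i ≤ j₀ := le_trans hia (S.le_max' ja (by simp [hSdef, hja]))
    have hgt : ∀ l : Fin k, j₀ < l → z l = 0 := by
      intro l hl
      by_contra hzl
      exact absurd (S.le_max' l (by simp [hSdef, hzl])) (not_le.2 hl)
    have hinner : ⟪v t, gramSchmidt ℝ b j₀⟫ = (z j₀ : ℝ) * ‖gramSchmidt ℝ b j₀‖ ^ 2 := by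
      rw [hvt, sum_inner, Finset.sum_eq_single j₀]
      · rw [real_inner_smul_left, inner_b_gs_self]
      · intro l _ hlj
        rcases lt_or_gt_of_ne hlj with h | h
        · rw [real_inner_smul_left, inner_b_gs_zero b h, mul_zero]
        · rw [hgt l h]; simp
      · intro habs; exact absurd (Finset.mem_univ j₀) habs
    have h1le : (1 : ℝ) ≤ |(z j₀ : ℝ)| := by
      rw [← Int.cast_abs]
      exact_mod_cast Int.one_le_abs hz₀
    have hcs := abs_real_inner_le_norm (v t) (gramSchmidt ℝ b j₀)
    rw [hinner, abs_mul, abs_of_nonneg (sq_nonneg ‖gramSchmidt ℝ b j₀‖)] at hcs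
    have hng : ‖gramSchmidt ℝ b j₀‖ ≤ ‖v t‖ := by
      have h0 := hgpos j₀
      nlinarith
    calc m ≤ ‖gramSchmidt ℝ b j₀‖ := Finset.inf'_le _ (by simp [hT, hij₀])
      _ ≤ ‖v t‖ := hng
      _ ≤ lam := hvn t
  have hne : Set.Nonempty {lam : ℝ | 0 < lam ∧
      ∃ v : Fin ((i : ℕ) + 1) → EuclideanSpace ℝ (Fin n),
      (∀ j, v j ∈ Submodule.span ℤ (Set.range b)) ∧ LinearIndependent ℝ v ∧
      ∀ j, ‖v j‖ ≤ lam} := by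
    have hik : (i : ℕ) + 1 ≤ k := i.isLt
    refine ⟨1 + ∑ j, ‖b j‖, ?_, fun t => b (Fin.castLE hik t), ?_, ?_, ?_⟩
    · have : (0:ℝ) ≤ ∑ j, ‖b j‖ := Finset.sum_nonneg fun j _ => norm_nonneg _
      linarith
    · intro t; exact Submodule.subset_span ⟨_, rfl⟩
    · exact hb.comp _ (Fin.castLE_injective _)
    · intro t
      have h1 : ‖b (Fin.castLE hik t)‖ ≤ ∑ j, ‖b j‖ :=
        Finset.single_le_sum (f := fun j => ‖b j‖) (fun j _ => norm_nonneg _) (Finset.mem_univ _)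
      linarith
  have hlow : m ≤ succMin b ((i : ℕ) + 1) := le_csInf hne hkey
  have hchain := gs_chain b hLLL ((j₁ : ℕ) - (i : ℕ)) i j₁ (by
    rw [Fin.le_def] at hij₁; omega)
  have hDD := normb_le_gs b hLLL i
  have hm0 : (0:ℝ) ≤ m := le_of_lt hmpos
  have hsm2 : m ^ 2 ≤ succMin b ((i : ℕ) + 1) ^ 2 := by nlinarith
  have hj₁k : (j₁ : ℕ) ≤ k - 1 := by have := j₁.isLt; omega
  have hp1 : (0:ℝ) ≤ 2 ^ (i : ℕ) := by positivity
  calc ‖b i‖ ^ 2 ≤ 2 ^ (i : ℕ) * ‖gramSchmidt ℝ b i‖ ^ 2 := hDD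
    _ ≤ 2 ^ (i : ℕ) * (2 ^ ((j₁ : ℕ) - (i : ℕ)) * ‖gramSchmidt ℝ b j₁‖ ^ 2) :=
        mul_le_mul_of_nonneg_left hchain hp1
    _ = 2 ^ (j₁ : ℕ) * ‖gramSchmidt ℝ b j₁‖ ^ 2 := by
        rw [← mul_assoc, ← pow_add]
        congr 2
        rw [Fin.le_def] at hij₁
        omega
    _ = 2 ^ (j₁ : ℕ) * m ^ 2 := by rw [hmj]
    _ ≤ 2 ^ (k - 1) * m ^ 2 :=
        mul_le_mul_of_nonneg_right (pow_le_pow_right₀ (by norm_num) hj₁k) (by positivity)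
    _ ≤ 2 ^ (k - 1) * succMin b ((i : ℕ) + 1) ^ 2 :=
        mul_le_mul_of_nonneg_left hsm2 (by positivity)

end
end

section
/- Let L ⊂ ℤⁿ be a k-dimensional lattice given by an LLL-reduced basis b₁, …, b_k. Then max_{i=1,…,k} ‖b_i‖ ≤ 2^{(k−1)/2} √n · det(L). -/
noncomputable section

open scoped BigOperators RealInnerProductSpace Pointwise

section LLLAux

open Finset

variable {n k : ℕ}

/-- Coefficient matrix expressing `b` in terms of its Gram–Schmidt vectors. -/
def gsM (b : Fin k → EuclideanSpace ℝ (Fin n)) : Matrix (Fin k) (Fin k) ℝ :=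
  Matrix.of fun p j => if j < p then gsMu b p j else if j = p then 1 else 0

lemma gsM_self (b : Fin k → EuclideanSpace ℝ (Fin n)) (p : Fin k) : gsM b p p = 1 := by
  simp [gsM]

lemma gsM_eq_zero (b : Fin k → EuclideanSpace ℝ (Fin n)) {p j : Fin k} (h : p < j) :
    gsM b p j = 0 := by
  simp [gsM, not_lt_of_gt h, (ne_of_gt h)]

lemma b_eq_sum (b : Fin k → EuclideanSpace ℝ (Fin n)) (p : Fin k) :
    b p = ∑ j, gsM b p j • InnerProductSpace.gramSchmidt ℝ b j := by
  have h := InnerProductSpace.gramSchmidt_def'' ℝ b p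
  rw [h]
  rw [← Finset.sum_subset (Finset.subset_univ (insert p (Finset.Iio p)))
      (fun j _ hj => ?_)]
  · rw [Finset.sum_insert (by simp)]
    rw [gsM_self, one_smul]
    congr 1
    refine Finset.sum_congr rfl fun j hj => ?_
    rw [Finset.mem_Iio] at hj
    simp only [gsM, Matrix.of_apply, if_pos hj]
    rw [gsMu, real_inner_comm]
    norm_num
  · have hpj : p < j := by
      simp only [Finset.mem_insert, Finset.mem_Iio] at hj
      push_neg at hj
      exact lt_of_le_of_ne hj.2 (Ne.symm hj.1)
    rw [gsM_eq_zero b hpj, zero_smul]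

lemma inner_b_eq (b : Fin k → EuclideanSpace ℝ (Fin n)) (p q : Fin k) :
    (⟪b p, b q⟫ : ℝ) = ∑ j, gsM b p j * gsM b q j * ‖InnerProductSpace.gramSchmidt ℝ b j‖ ^ 2 := by
  conv_lhs => rw [b_eq_sum b p, b_eq_sum b q]
  rw [sum_inner]
  refine Finset.sum_congr rfl fun j _ => ?_
  rw [inner_sum]
  rw [Finset.sum_eq_single j (fun l _ hl => by
    rw [real_inner_smul_left, real_inner_smul_right,
      InnerProductSpace.gramSchmidt_orthogonal ℝ b (Ne.symm hl)]
    ring) (by simp)]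
  rw [real_inner_smul_left, real_inner_smul_right, real_inner_self_eq_norm_sq]
  ring

lemma inner_b_castLE (b : Fin k → EuclideanSpace ℝ (Fin n)) {l : ℕ} (hl : l ≤ k)
    (p q : Fin l) :
    (⟪b (Fin.castLE hl p), b (Fin.castLE hl q)⟫ : ℝ)
      = ∑ j : Fin l, gsM b (Fin.castLE hl p) (Fin.castLE hl j) *
          gsM b (Fin.castLE hl q) (Fin.castLE hl j) *
          ‖InnerProductSpace.gramSchmidt ℝ b (Fin.castLE hl j)‖ ^ 2 := by
  rw [inner_b_eq]
  have hmap : (∑ j : Fin l, gsM b (Fin.castLE hl p) (Fin.castLE hl j) *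
        gsM b (Fin.castLE hl q) (Fin.castLE hl j) * ‖InnerProductSpace.gramSchmidt ℝ b (Fin.castLE hl j)‖ ^ 2)
      = ∑ j ∈ Finset.univ.map (Fin.castLEEmb hl),
          gsM b (Fin.castLE hl p) j * gsM b (Fin.castLE hl q) j * ‖InnerProductSpace.gramSchmidt ℝ b j‖ ^ 2 := by
    rw [Finset.sum_map]
    rfl
  rw [hmap]
  symm
  refine Finset.sum_subset (Finset.subset_univ _) fun j _ hj => ?_
  have hjl : l ≤ (j : ℕ) := by
    by_contra hc
    push_neg at hc
    exact hj (Finset.mem_map.mpr ⟨⟨(j : ℕ), hc⟩, Finset.mem_univ _, Fin.ext rfl⟩)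
  have hpj : Fin.castLE hl p < j := by
    rw [Fin.lt_def]
    exact lt_of_lt_of_le p.isLt hjl
  rw [gsM_eq_zero b hpj]
  ring

lemma det_gram_castLE (b : Fin k → EuclideanSpace ℝ (Fin n)) {l : ℕ} (hl : l ≤ k) :
    Matrix.det (Matrix.of fun p q : Fin l =>
        (⟪b (Fin.castLE hl p), b (Fin.castLE hl q)⟫ : ℝ))
      = ∏ j : Fin l, ‖InnerProductSpace.gramSchmidt ℝ b (Fin.castLE hl j)‖ ^ 2 := by
  classical
  set M : Matrix (Fin l) (Fin l) ℝ :=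
    Matrix.of fun p j : Fin l => gsM b (Fin.castLE hl p) (Fin.castLE hl j) with hM
  set D : Matrix (Fin l) (Fin l) ℝ :=
    Matrix.diagonal (fun j : Fin l => ‖InnerProductSpace.gramSchmidt ℝ b (Fin.castLE hl j)‖ ^ 2) with hD
  have hfact : (Matrix.of fun p q : Fin l =>
      (⟪b (Fin.castLE hl p), b (Fin.castLE hl q)⟫ : ℝ)) = M * D * M.transpose := by
    ext p q
    rw [Matrix.of_apply, inner_b_castLE b hl p q, Matrix.mul_apply]
    refine Finset.sum_congr rfl fun j _ => ?_
    rw [Matrix.mul_diagonal, Matrix.transpose_apply]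
    simp only [hM, Matrix.of_apply]
    ring
  have hMdet : M.det = 1 := by
    have htri : M.BlockTriangular OrderDual.toDual := by
      intro p j hpj
      have : p < j := hpj
      exact gsM_eq_zero b (by rw [Fin.lt_def]; exact this)
    rw [Matrix.det_of_lowerTriangular M htri]
    refine Finset.prod_eq_one fun j _ => ?_
    simp only [hM, Matrix.of_apply]
    exact gsM_self b _
  rw [hfact, Matrix.det_mul, Matrix.det_mul, Matrix.det_transpose, hMdet,
    one_mul, mul_one, hD, Matrix.det_diagonal]

lemma one_le_prod_gram (b : Fin k → EuclideanSpace ℝ (Fin n))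
    (hb : LinearIndependent ℝ b) (hint : ∀ i, IsIntegerVec (b i)) {l : ℕ} (hl : l ≤ k) :
    (1 : ℝ) ≤ ∏ j : Fin l, ‖InnerProductSpace.gramSchmidt ℝ b (Fin.castLE hl j)‖ ^ 2 := by
  classical
  choose z hz using hint
  set Z : Matrix (Fin l) (Fin l) ℤ :=
    Matrix.of fun p q => ∑ t, z (Fin.castLE hl p) t * z (Fin.castLE hl q) t with hZdef
  have hZ : (Matrix.of fun p q : Fin l =>
      (⟪b (Fin.castLE hl p), b (Fin.castLE hl q)⟫ : ℝ)) = Z.map (Int.cast : ℤ → ℝ) := by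
    ext p q
    simp only [Matrix.map_apply, Matrix.of_apply, hZdef, PiLp.inner_apply,
      RCLike.inner_apply, conj_trivial]
    push_cast
    refine Finset.sum_congr rfl fun t _ => ?_
    rw [hz (Fin.castLE hl p) t, hz (Fin.castLE hl q) t, mul_comm]
  have hdet : ((Z.det : ℤ) : ℝ) = ∏ j : Fin l, ‖InnerProductSpace.gramSchmidt ℝ b (Fin.castLE hl j)‖ ^ 2 := by
    rw [← det_gram_castLE b hl, hZ]
    simpa using RingHom.map_det (Int.castRingHom ℝ) Z
  have hpos : 0 < ∏ j : Fin l, ‖InnerProductSpace.gramSchmidt ℝ b (Fin.castLE hl j)‖ ^ 2 :=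
    Finset.prod_pos fun j _ =>
      pow_pos (norm_pos_iff.mpr (InnerProductSpace.gramSchmidt_ne_zero _ hb)) 2
  have hZpos : (0 : ℤ) < Z.det := by exact_mod_cast hdet ▸ hpos
  calc (1 : ℝ) ≤ ((Z.det : ℤ) : ℝ) := by exact_mod_cast hZpos
    _ = _ := hdet

lemma gs_decay (b : Fin k → EuclideanSpace ℝ (Fin n)) (hLLL : IsLLLReduced b) :
    ∀ d : ℕ, ∀ j m : Fin k, (j : ℕ) + d = (m : ℕ) →
      ‖InnerProductSpace.gramSchmidt ℝ b j‖ ^ 2 ≤ 2 ^ d * ‖InnerProductSpace.gramSchmidt ℝ b m‖ ^ 2 := by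
  intro d
  induction d with
  | zero =>
    intro j m h
    have : j = m := Fin.ext (by omega)
    subst this
    simp
  | succ d ih =>
    intro j m h
    have hm : (j : ℕ) + d < k := by omega
    set m₀ : Fin k := ⟨(j : ℕ) + d, lt_trans (by omega) m.isLt⟩ with hm₀
    have h1 := ih j m₀ rfl
    have hlt : m₀ < m := by rw [Fin.lt_def]; simp [hm₀]; omega
    have h2 : ‖InnerProductSpace.gramSchmidt ℝ b m₀‖ ^ 2 ≤ 2 * ‖InnerProductSpace.gramSchmidt ℝ b m‖ ^ 2 := by
      have hlov := hLLL.2 m m₀ (by simp [hm₀]; omega)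
      have hmu := hLLL.1 m m₀ hlt
      have hmu2 : gsMu b m m₀ ^ 2 ≤ 1 / 4 := by
        have h' := abs_le.mp hmu
        nlinarith [h'.1, h'.2]
      nlinarith [sq_nonneg ‖InnerProductSpace.gramSchmidt ℝ b m₀‖, sq_nonneg ‖InnerProductSpace.gramSchmidt ℝ b m‖]
    calc ‖InnerProductSpace.gramSchmidt ℝ b j‖ ^ 2 ≤ 2 ^ d * ‖InnerProductSpace.gramSchmidt ℝ b m₀‖ ^ 2 := h1
      _ ≤ 2 ^ d * (2 * ‖InnerProductSpace.gramSchmidt ℝ b m‖ ^ 2) := by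
          exact mul_le_mul_of_nonneg_left h2 (by positivity)
      _ = 2 ^ (d + 1) * ‖InnerProductSpace.gramSchmidt ℝ b m‖ ^ 2 := by ring

lemma gs_decay' (b : Fin k → EuclideanSpace ℝ (Fin n)) (hLLL : IsLLLReduced b)
    {j m : Fin k} (hjm : j ≤ m) :
    ‖InnerProductSpace.gramSchmidt ℝ b j‖ ^ 2
      ≤ 2 ^ (m : ℕ) * (1 / 2 : ℝ) ^ (j : ℕ) * ‖InnerProductSpace.gramSchmidt ℝ b m‖ ^ 2 := by
  have h := gs_decay b hLLL ((m : ℕ) - (j : ℕ)) j m (by omega)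
  have hpow : (2 : ℝ) ^ ((m : ℕ) - (j : ℕ))
      = 2 ^ (m : ℕ) * (1 / 2 : ℝ) ^ (j : ℕ) := by
    rw [pow_sub₀ (2 : ℝ) two_ne_zero (show (j : ℕ) ≤ (m : ℕ) from hjm), one_div, inv_pow]
  rw [hpow] at h
  exact h

lemma norm_b_sq_le (b : Fin k → EuclideanSpace ℝ (Fin n)) (hLLL : IsLLLReduced b)
    (i m : Fin k) (him : i ≤ m) :
    ‖b i‖ ^ 2 ≤ 2 ^ (k - 1) * ‖InnerProductSpace.gramSchmidt ℝ b m‖ ^ 2 := by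
  classical
  set w := ‖InnerProductSpace.gramSchmidt ℝ b m‖ ^ 2 with hw
  have hw0 : 0 ≤ w := sq_nonneg _
  have hsq : ‖b i‖ ^ 2 = ∑ j, gsM b i j ^ 2 * ‖InnerProductSpace.gramSchmidt ℝ b j‖ ^ 2 := by
    have h := inner_b_eq b i i
    rw [real_inner_self_eq_norm_sq] at h
    rw [h]
    exact Finset.sum_congr rfl fun j _ => by ring
  rw [hsq]
  have hsplit := Finset.sum_filter_add_sum_filter_not Finset.univ (fun j : Fin k => j < i)
    (fun j => gsM b i j ^ 2 * ‖InnerProductSpace.gramSchmidt ℝ b j‖ ^ 2)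
  rw [← hsplit]
  have hsum2 : ∑ j ∈ Finset.univ.filter (fun j : Fin k => ¬ j < i),
      gsM b i j ^ 2 * ‖InnerProductSpace.gramSchmidt ℝ b j‖ ^ 2
      ≤ 2 ^ (m : ℕ) * (1 / 2 : ℝ) ^ (i : ℕ) * w := by
    rw [Finset.sum_eq_single_of_mem i (by simp) (fun j _ hji => ?_)]
    · rw [gsM_self, one_pow, one_mul]
      exact gs_decay' b hLLL him
    · have hij : i < j := by
        rcases Finset.mem_filter.mp ‹j ∈ _› with ⟨_, hj⟩
        exact lt_of_le_of_ne (not_lt.mp hj) (Ne.symm hji)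
      rw [gsM_eq_zero b hij]
      ring
  have hsum1 : ∑ j ∈ Finset.univ.filter (fun j : Fin k => j < i),
      gsM b i j ^ 2 * ‖InnerProductSpace.gramSchmidt ℝ b j‖ ^ 2
      ≤ ∑ j ∈ Finset.univ.filter (fun j : Fin k => j < i),
        (1 / 4 : ℝ) * (2 ^ (m : ℕ) * (1 / 2 : ℝ) ^ (j : ℕ) * w) := by
    refine Finset.sum_le_sum fun j hj => ?_
    have hji : j < i := (Finset.mem_filter.mp hj).2
    have hmu := hLLL.1 i j hji
    have hgsM : gsM b i j ^ 2 ≤ 1 / 4 := by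
      have : gsM b i j = gsMu b i j := by simp [gsM, hji]
      rw [this]
      have h' := abs_le.mp hmu
      nlinarith [h'.1, h'.2]
    have hgj := gs_decay' b hLLL (le_trans hji.le him)
    calc gsM b i j ^ 2 * ‖InnerProductSpace.gramSchmidt ℝ b j‖ ^ 2
        ≤ (1 / 4 : ℝ) * ‖InnerProductSpace.gramSchmidt ℝ b j‖ ^ 2 :=
          mul_le_mul_of_nonneg_right hgsM (sq_nonneg _)
      _ ≤ (1 / 4 : ℝ) * (2 ^ (m : ℕ) * (1 / 2 : ℝ) ^ (j : ℕ) * w) := by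
          exact mul_le_mul_of_nonneg_left hgj (by norm_num)
  have hgeo : ∑ j ∈ Finset.univ.filter (fun j : Fin k => j < i),
      (1 / 4 : ℝ) * (2 ^ (m : ℕ) * (1 / 2 : ℝ) ^ (j : ℕ) * w)
      ≤ (1 / 4 : ℝ) * (2 ^ (m : ℕ) * w) * 2 := by
    have h1 : ∑ j ∈ Finset.univ.filter (fun j : Fin k => j < i),
        (1 / 2 : ℝ) ^ (j : ℕ) ≤ 2 := by
      calc ∑ j ∈ Finset.univ.filter (fun j : Fin k => j < i), (1 / 2 : ℝ) ^ (j : ℕ)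
          ≤ ∑ j : Fin k, (1 / 2 : ℝ) ^ (j : ℕ) :=
            Finset.sum_le_sum_of_subset_of_nonneg (Finset.filter_subset _ _)
              (fun j _ _ => by positivity)
        _ = ∑ j ∈ Finset.range k, (1 / 2 : ℝ) ^ j := Fin.sum_univ_eq_sum_range _ k
        _ ≤ 2 := sum_geometric_two_le k
    calc ∑ j ∈ Finset.univ.filter (fun j : Fin k => j < i),
        (1 / 4 : ℝ) * (2 ^ (m : ℕ) * (1 / 2 : ℝ) ^ (j : ℕ) * w)
        = (1 / 4 : ℝ) * (2 ^ (m : ℕ) * w) *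
            ∑ j ∈ Finset.univ.filter (fun j : Fin k => j < i), (1 / 2 : ℝ) ^ (j : ℕ) := by
          rw [Finset.mul_sum]
          exact Finset.sum_congr rfl fun j _ => by ring
      _ ≤ (1 / 4 : ℝ) * (2 ^ (m : ℕ) * w) * 2 := by
          exact mul_le_mul_of_nonneg_left h1 (by positivity)
  have hmk : 2 ^ (m : ℕ) ≤ (2 : ℝ) ^ (k - 1) := by
    apply pow_le_pow_right₀ (by norm_num)
    omega
  have hwpos : 0 ≤ (2 : ℝ) ^ (m : ℕ) * w := by positivity
  rcases Nat.eq_zero_or_pos (i : ℕ) with hi0 | hi1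
  · have hempty : Finset.univ.filter (fun j : Fin k => j < i) = ∅ := by
      refine Finset.filter_false_of_mem fun j _ => ?_
      rw [Fin.lt_def, hi0]
      omega
    rw [hempty, Finset.sum_empty, zero_add]
    calc ∑ j ∈ Finset.univ.filter (fun j : Fin k => ¬ j < i),
          gsM b i j ^ 2 * ‖InnerProductSpace.gramSchmidt ℝ b j‖ ^ 2
        ≤ 2 ^ (m : ℕ) * (1 / 2 : ℝ) ^ (i : ℕ) * w := hsum2
      _ = 2 ^ (m : ℕ) * w := by rw [hi0]; ring
      _ ≤ 2 ^ (k - 1) * w := mul_le_mul_of_nonneg_right hmk hw0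
  · have hhalf : (1 / 2 : ℝ) ^ (i : ℕ) ≤ 1 / 2 := by
      calc (1 / 2 : ℝ) ^ (i : ℕ) ≤ (1 / 2 : ℝ) ^ 1 :=
        pow_le_pow_of_le_one (by norm_num) (by norm_num) hi1
      _ = 1 / 2 := pow_one _
    have h2 : 2 ^ (m : ℕ) * (1 / 2 : ℝ) ^ (i : ℕ) * w ≤ (1 / 2 : ℝ) * (2 ^ (m : ℕ) * w) := by
      have := mul_le_mul_of_nonneg_right
        (mul_le_mul_of_nonneg_left hhalf (by positivity : (0:ℝ) ≤ 2 ^ (m : ℕ))) hw0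
      calc 2 ^ (m : ℕ) * (1 / 2 : ℝ) ^ (i : ℕ) * w
          ≤ 2 ^ (m : ℕ) * (1 / 2 : ℝ) * w := this
        _ = (1 / 2 : ℝ) * (2 ^ (m : ℕ) * w) := by ring
    calc (∑ j ∈ Finset.univ.filter (fun j : Fin k => j < i),
          gsM b i j ^ 2 * ‖InnerProductSpace.gramSchmidt ℝ b j‖ ^ 2)
        + ∑ j ∈ Finset.univ.filter (fun j : Fin k => ¬ j < i),
          gsM b i j ^ 2 * ‖InnerProductSpace.gramSchmidt ℝ b j‖ ^ 2
        ≤ (1 / 4 : ℝ) * (2 ^ (m : ℕ) * w) * 2 + (1 / 2 : ℝ) * (2 ^ (m : ℕ) * w) := by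
          exact add_le_add (le_trans hsum1 hgeo) (le_trans hsum2 h2)
      _ = 2 ^ (m : ℕ) * w := by ring
      _ ≤ 2 ^ (k - 1) * w := mul_le_mul_of_nonneg_right hmk hw0

end LLLAux

/-- Lemma 3: for an LLL-reduced basis of a `k`-dimensional lattice
`L ⊂ ℤⁿ`, `max_i ‖b_i‖ ≤ 2^{(k−1)/2} √n · det(L)`. -/
theorem norm_le_two_rpow_mul_sqrt_mul_det {n k : ℕ}
    (b : Fin k → EuclideanSpace ℝ (Fin n)) (hb : LinearIndependent ℝ b)
    (hint : ∀ i, IsIntegerVec (b i)) (hLLL : IsLLLReduced b) (i : Fin k) :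
    ‖b i‖ ≤ (2 : ℝ) ^ (((k : ℝ) - 1) / 2) * Real.sqrt n * latticeDet b := by
  classical
  have hk : 0 < k := i.pos
  have hn : 1 ≤ n := by
    by_contra hn
    push_neg at hn
    have hn0 : n = 0 := by omega
    subst hn0
    have hnorm : ‖b i‖ = 0 := by
      rw [EuclideanSpace.norm_eq]
      simp
    exact hb.ne_zero i (norm_eq_zero.mp hnorm)
  set g := InnerProductSpace.gramSchmidt ℝ b with hg
  have hdetG : Matrix.det (Matrix.of fun p q : Fin k => (⟪b p, b q⟫ : ℝ))
      = ∏ j : Fin k, ‖g j‖ ^ 2 := det_gram_castLE b (le_refl k)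
  have hP1 : (1 : ℝ) ≤ ∏ j : Fin k, ‖g j‖ ^ 2 := one_le_prod_gram b hb hint (le_refl k)
  set D := latticeDet b with hD
  have hDsqrt : D = Real.sqrt (∏ j : Fin k, ‖g j‖ ^ 2) := by
    rw [hD, latticeDet, hdetG]
  have hD1 : 1 ≤ D := by
    rw [hDsqrt, show (1 : ℝ) = Real.sqrt 1 from Real.sqrt_one.symm]
    exact Real.sqrt_le_sqrt hP1
  have hD2 : D ^ 2 = ∏ j : Fin k, ‖g j‖ ^ 2 := by
    rw [hDsqrt, Real.sq_sqrt (le_trans zero_le_one hP1)]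
  set s := Finset.univ.filter (fun j : Fin k => ¬ j < i) with hs
  have his : i ∈ s := by simp [hs]
  obtain ⟨m₀, hm₀s, hm₀min⟩ := Finset.exists_min_image s (fun j => ‖g j‖) ⟨i, his⟩
  have him₀ : i ≤ m₀ := le_of_not_gt (Finset.mem_filter.mp hm₀s).2
  have hsplit := Finset.prod_filter_mul_prod_filter_not Finset.univ (fun j : Fin k => j < i)
    (fun j => ‖g j‖ ^ 2)
  have hlt1 : (1 : ℝ) ≤ ∏ j ∈ Finset.univ.filter (fun j : Fin k => j < i), ‖g j‖ ^ 2 := by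
    have h := one_le_prod_gram b hb hint (le_of_lt i.isLt)
    have hmapeq : Finset.univ.filter (fun j : Fin k => j < i)
        = Finset.univ.map (Fin.castLEEmb (le_of_lt i.isLt)) := by
      ext j
      simp only [Finset.mem_filter, Finset.mem_univ, true_and, Finset.mem_map]
      constructor
      · intro hj
        exact ⟨⟨(j : ℕ), hj⟩, Fin.ext rfl⟩
      · rintro ⟨a, rfl⟩
        exact a.isLt
    rw [hmapeq, Finset.prod_map]
    exact h
  have hge_le : (∏ j ∈ s, ‖g j‖ ^ 2) ≤ ∏ j : Fin k, ‖g j‖ ^ 2 := by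
    rw [← hsplit]
    exact le_mul_of_one_le_left (Finset.prod_nonneg fun j _ => sq_nonneg _) hlt1
  have hminprod : (‖g m₀‖ ^ 2) ^ s.card ≤ ∏ j ∈ s, ‖g j‖ ^ 2 := by
    rw [← Finset.prod_const]
    exact Finset.prod_le_prod (fun j _ => sq_nonneg _)
      (fun j hj => pow_le_pow_left₀ (norm_nonneg _) (hm₀min j hj) 2)
  have hm₀D : ‖g m₀‖ ≤ D := by
    rcases le_or_gt ‖g m₀‖ 1 with h1 | h1
    · exact le_trans h1 hD1
    · have hcard : s.card ≠ 0 := Finset.card_ne_zero_of_mem his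
      have h2 : ‖g m₀‖ ^ 2 ≤ D ^ 2 := by
        calc ‖g m₀‖ ^ 2 ≤ (‖g m₀‖ ^ 2) ^ s.card :=
            le_self_pow₀ (by nlinarith) hcard
          _ ≤ ∏ j ∈ s, ‖g j‖ ^ 2 := hminprod
          _ ≤ ∏ j : Fin k, ‖g j‖ ^ 2 := hge_le
          _ = D ^ 2 := hD2.symm
      calc ‖g m₀‖ = Real.sqrt (‖g m₀‖ ^ 2) := (Real.sqrt_sq (norm_nonneg _)).symm
        _ ≤ Real.sqrt (D ^ 2) := Real.sqrt_le_sqrt h2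
        _ = D := Real.sqrt_sq (le_trans zero_le_one hD1)
  have hbi := norm_b_sq_le b hLLL i m₀ him₀
  have hfin : ‖b i‖ ≤ Real.sqrt (2 ^ (k - 1)) * D := by
    calc ‖b i‖ = Real.sqrt (‖b i‖ ^ 2) := (Real.sqrt_sq (norm_nonneg _)).symm
      _ ≤ Real.sqrt (2 ^ (k - 1) * ‖g m₀‖ ^ 2) := Real.sqrt_le_sqrt hbi
      _ = Real.sqrt (2 ^ (k - 1)) * Real.sqrt (‖g m₀‖ ^ 2) := Real.sqrt_mul (by positivity) _
      _ = Real.sqrt (2 ^ (k - 1)) * ‖g m₀‖ := by rw [Real.sqrt_sq (norm_nonneg _)]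
      _ ≤ Real.sqrt (2 ^ (k - 1)) * D :=
          mul_le_mul_of_nonneg_left hm₀D (Real.sqrt_nonneg _)
  have hrpow : (2 : ℝ) ^ (((k : ℝ) - 1) / 2) = Real.sqrt ((2 : ℝ) ^ (k - 1)) := by
    have h1 : ((k : ℝ) - 1) = ((k - 1 : ℕ) : ℝ) := by
      rw [Nat.cast_sub hk]
      norm_num
    rw [h1, Real.sqrt_eq_rpow, ← Real.rpow_natCast (2 : ℝ) (k - 1),
      ← Real.rpow_mul (by norm_num)]
    congr 1
    ring
  have hsqn : 1 ≤ Real.sqrt n := by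
    rw [show (1 : ℝ) = Real.sqrt 1 from Real.sqrt_one.symm]
    exact Real.sqrt_le_sqrt (by exact_mod_cast hn)
  have hA : (0 : ℝ) ≤ (2 : ℝ) ^ (((k : ℝ) - 1) / 2) := Real.rpow_nonneg (by norm_num) _
  have hD0 : (0 : ℝ) ≤ D := le_trans zero_le_one hD1
  calc ‖b i‖ ≤ Real.sqrt (2 ^ (k - 1)) * D := hfin
    _ = (2 : ℝ) ^ (((k : ℝ) - 1) / 2) * D := by rw [hrpow]
    _ ≤ (2 : ℝ) ^ (((k : ℝ) - 1) / 2) * Real.sqrt n * D := by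
        nlinarith [mul_nonneg (mul_nonneg hA hD0) (sub_nonneg.mpr hsqn)]

end
end

section
/- Let L be a k-dimensional lattice in ℝⁿ and B the unit Euclidean ball in span_ℝ(L). Then det(L) ≤ Π_{i=1}^k λ_i(B, L) ≤ γ_k^{k/2} det(L), where γ_k is the k-dimensional Hermite constant. -/
noncomputable section

open scoped BigOperators RealInnerProductSpace Pointwise

namespace MinkAux

open Submodule Set Metric Module MeasureTheory
open InnerProductSpace

lemma mem_spanR {n k : ℕ} {b : Fin k → EuclideanSpace ℝ (Fin n)} {x : EuclideanSpace ℝ (Fin n)}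
    (hx : x ∈ span ℤ (Set.range b)) : x ∈ span ℝ (Set.range b) :=
  Submodule.span_subset_span ℤ ℝ _ hx

lemma lattice_inter_finite {n k : ℕ} {b : Fin k → EuclideanSpace ℝ (Fin n)}
    (hb : LinearIndependent ℝ b) {s : Set (EuclideanSpace ℝ (Fin n))}
    (hs : Bornology.IsBounded s) :
    (s ∩ (span ℤ (Set.range b) : Set (EuclideanSpace ℝ (Fin n)))).Finite := by
  classical
  have hsr : LinearIndepOn ℝ id (Set.range b) :=
    (linearIndepOn_id_range_iff hb.injective).mpr hb
  let B := Basis.extend hsr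
  have hfin : Finite (LinearIndepOn.extend hsr (Set.subset_univ (Set.range b))) :=
    (B.finite_index_of_rank_lt_aleph0 (rank_lt_aleph0 ℝ _)).to_subtype
  have hsub : (span ℤ (Set.range b) : Set (EuclideanSpace ℝ (Fin n))) ⊆
      (span ℤ (Set.range ⇑B) : Set (EuclideanSpace ℝ (Fin n))) := by
    intro x hx
    refine SetLike.coe_subset_coe.mpr (span_mono ?_) hx
    rw [Basis.coe_extend, Subtype.range_coe]
    exact LinearIndepOn.subset_extend hsr _
  have hdisc : DiscreteTopology (span ℤ (Set.range ⇑B)) := inferInstance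
  have hclosed : IsClosed (span ℤ (Set.range ⇑B) : Set (EuclideanSpace ℝ (Fin n))) := by
    change IsClosed ((span ℤ (Set.range ⇑B)).toAddSubgroup : Set (EuclideanSpace ℝ (Fin n)))
    exact AddSubgroup.isClosed_of_discrete
  have : DiscreteTopology ((span ℤ (Set.range ⇑B) : Set (EuclideanSpace ℝ (Fin n)))) := hdisc
  exact (Metric.finite_isBounded_inter_isClosed (isDiscrete_iff_discreteTopology.mpr this) hs hclosed).subset
    (Set.inter_subset_inter_right _ hsub)

lemma exists_min_outside {n k : ℕ} {b : Fin k → EuclideanSpace ℝ (Fin n)}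
    (hb : LinearIndependent ℝ b) (W : Submodule ℝ (EuclideanSpace ℝ (Fin n)))
    {x₀ : EuclideanSpace ℝ (Fin n)} (hx₀ : x₀ ∈ span ℤ (Set.range b)) (hx₀W : x₀ ∉ W) :
    ∃ u, u ∈ span ℤ (Set.range b) ∧ u ∉ W ∧
      ∀ x ∈ span ℤ (Set.range b), x ∉ W → ‖u‖ ≤ ‖x‖ := by
  classical
  set T : Set (EuclideanSpace ℝ (Fin n)) :=
    {x | x ∈ closedBall 0 ‖x₀‖ ∩ (span ℤ (Set.range b) : Set _) ∧ x ∉ W} with hT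
  have hTfin : T.Finite :=
    (lattice_inter_finite hb isBounded_closedBall).subset (fun x hx => hx.1)
  have hTne : T.Nonempty := ⟨x₀, ⟨mem_closedBall_zero_iff.2 le_rfl, hx₀⟩, hx₀W⟩
  obtain ⟨u, huT, humin⟩ := Set.exists_min_image T (fun x => ‖x‖) hTfin hTne
  refine ⟨u, huT.1.2, huT.2, fun x hxL hxW => ?_⟩
  by_cases hx : ‖x‖ ≤ ‖x₀‖
  · exact humin x ⟨⟨mem_closedBall_zero_iff.2 hx, hxL⟩, hxW⟩
  · exact le_trans (humin x₀ ⟨⟨mem_closedBall_zero_iff.2 le_rfl, hx₀⟩, hx₀W⟩)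
      (le_of_not_ge hx)

lemma snoc_image_lt_castSucc {α : Type*} {m : ℕ} (u : Fin m → α) (x : α) (i : Fin m) :
    (Fin.snoc u x : Fin (m+1) → α) '' {j | j < Fin.castSucc i} = u '' {j | j < i} := by
  ext a
  constructor
  · rintro ⟨j, hj, rfl⟩
    have hj' : (j : ℕ) < (i : ℕ) := hj
    have hlt : (j : ℕ) < m := hj'.trans i.isLt
    refine ⟨j.castLT hlt, hj', ?_⟩
    conv_rhs => rw [← Fin.castSucc_castLT j hlt]
    rw [Fin.snoc_castSucc]
  · rintro ⟨j, hj, rfl⟩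
    exact ⟨Fin.castSucc j, by simpa using hj, by simp⟩

lemma snoc_image_lt_last {α : Type*} {m : ℕ} (u : Fin m → α) (x : α) :
    (Fin.snoc u x : Fin (m+1) → α) '' {j | j < Fin.last m} = Set.range u := by
  ext a
  constructor
  · rintro ⟨j, hj, rfl⟩
    have hlt : (j : ℕ) < m := hj
    refine ⟨j.castLT hlt, ?_⟩
    conv_rhs => rw [← Fin.castSucc_castLT j hlt]
    rw [Fin.snoc_castSucc]
  · rintro ⟨j, rfl⟩
    exact ⟨Fin.castSucc j, Fin.castSucc_lt_last j, by simp⟩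

lemma exists_greedy {n k : ℕ} {b : Fin k → EuclideanSpace ℝ (Fin n)}
    (hb : LinearIndependent ℝ b) :
    ∃ u : Fin k → EuclideanSpace ℝ (Fin n),
      (∀ i, u i ∈ span ℤ (Set.range b)) ∧ LinearIndependent ℝ u ∧
      (∀ i : Fin k, ∀ x ∈ span ℤ (Set.range b),
        x ∉ span ℝ (u '' {j | j < i}) → ‖u i‖ ≤ ‖x‖) := by
  classical
  suffices H : ∀ m, m ≤ k → ∃ u : Fin m → EuclideanSpace ℝ (Fin n),
      (∀ i, u i ∈ span ℤ (Set.range b)) ∧ LinearIndependent ℝ u ∧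
      (∀ i : Fin m, ∀ x ∈ span ℤ (Set.range b),
        x ∉ span ℝ (u '' {j | j < i}) → ‖u i‖ ≤ ‖x‖) from H k le_rfl
  intro m
  induction m with
  | zero =>
    intro _
    exact ⟨Fin.elim0, fun i => i.elim0, linearIndependent_empty_type, fun i => i.elim0⟩
  | succ m ih =>
    intro hm
    obtain ⟨u, humem, hu, humin⟩ := ih (Nat.le_of_succ_le hm)
    set W : Submodule ℝ (EuclideanSpace ℝ (Fin n)) := span ℝ (Set.range u) with hW
    have hex : ∃ x₀, x₀ ∈ span ℤ (Set.range b) ∧ x₀ ∉ W := by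
      by_contra hcon
      push_neg at hcon
      have hrange : Set.range b ⊆ (W : Set _) := by
        rintro - ⟨i, rfl⟩
        exact hcon (b i) (subset_span (Set.mem_range_self i))
      have hle : span ℝ (Set.range b) ≤ W := span_le.mpr hrange
      have h1 : finrank ℝ (span ℝ (Set.range b)) = k := by
        rw [finrank_span_eq_card hb, Fintype.card_fin]
      have h2 : finrank ℝ W ≤ m := by
        refine le_trans (finrank_span_le_card (Set.range u)) ?_
        rw [Set.toFinset_range]
        exact le_trans (Finset.card_image_le) (by simp)
      have := Submodule.finrank_mono hle
      omega
    obtain ⟨x₀, hx₀, hx₀W⟩ := hex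
    obtain ⟨z, hzL, hzW, hzmin⟩ := exists_min_outside hb W hx₀ hx₀W
    refine ⟨Fin.snoc u z, ?_, ?_, ?_⟩
    · intro i
      refine Fin.lastCases ?_ ?_ i
      · rw [Fin.snoc_last]; exact hzL
      · intro j; rw [Fin.snoc_castSucc]; exact humem j
    · exact linearIndependent_fin_snoc.mpr ⟨hu, hzW⟩
    · intro i
      refine Fin.lastCases ?_ ?_ i
      · intro x hxL hxW
        rw [Fin.snoc_last]
        rw [snoc_image_lt_last] at hxW
        exact hzmin x hxL hxW
      · intro j x hxL hxW
        rw [Fin.snoc_castSucc]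
        rw [snoc_image_lt_castSucc] at hxW
        exact humin j x hxL hxW

lemma image_lt_eq_range {n k : ℕ} (u : Fin k → EuclideanSpace ℝ (Fin n)) (i : Fin k) :
    u '' {j | j < i} = Set.range (fun j : Fin (i : ℕ) => u (Fin.castLE i.isLt.le j)) := by
  ext a
  constructor
  · rintro ⟨j, hj, rfl⟩
    exact ⟨⟨j, hj⟩, rfl⟩
  · rintro ⟨j, rfl⟩
    exact ⟨Fin.castLE i.isLt.le j, j.isLt, rfl⟩

lemma finrank_span_lt_le {n k : ℕ} (u : Fin k → EuclideanSpace ℝ (Fin n)) (i : Fin k) :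
    finrank ℝ (span ℝ (u '' {j | j < i})) ≤ (i : ℕ) := by
  classical
  rw [image_lt_eq_range]
  refine le_trans (finrank_span_le_card _) ?_
  rw [Set.toFinset_range]
  exact le_trans (Finset.card_image_le) (by simp)

lemma u_not_mem_span {n k : ℕ} {u : Fin k → EuclideanSpace ℝ (Fin n)}
    (hu : LinearIndependent ℝ u) (i : Fin k) : u i ∉ span ℝ (u '' {j | j < i}) :=
  hu.notMem_span_image (by simp)

lemma norm_u_pos {n k : ℕ} {u : Fin k → EuclideanSpace ℝ (Fin n)}
    (hu : LinearIndependent ℝ u) (i : Fin k) : 0 < ‖u i‖ :=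
  norm_pos_iff.mpr (hu.ne_zero i)

lemma norm_u_mono {n k : ℕ} {b u : Fin k → EuclideanSpace ℝ (Fin n)}
    (humem : ∀ i, u i ∈ span ℤ (Set.range b)) (hu : LinearIndependent ℝ u)
    (humin : ∀ i : Fin k, ∀ x ∈ span ℤ (Set.range b),
      x ∉ span ℝ (u '' {j | j < i}) → ‖u i‖ ≤ ‖x‖)
    {i j : Fin k} (hij : i ≤ j) : ‖u i‖ ≤ ‖u j‖ := by
  rcases eq_or_lt_of_le hij with rfl | hij'
  · exact le_rfl
  · refine humin i (u j) (humem j) fun hmem => ?_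
    exact hu.notMem_span_image (s := {j'' | j'' < j}) (by simp) (span_mono
      (Set.image_mono (f := u) fun a (ha : a < i) => lt_trans ha hij') hmem)

lemma succMin_eq_greedy {n k : ℕ} {b u : Fin k → EuclideanSpace ℝ (Fin n)}
    (humem : ∀ i, u i ∈ span ℤ (Set.range b)) (hu : LinearIndependent ℝ u)
    (humin : ∀ i : Fin k, ∀ x ∈ span ℤ (Set.range b),
      x ∉ span ℝ (u '' {j | j < i}) → ‖u i‖ ≤ ‖x‖)
    (i : Fin k) : succMin b ((i : ℕ) + 1) = ‖u i‖ := by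
  classical
  have hik : (i : ℕ) + 1 ≤ k := i.isLt
  have hmem : ‖u i‖ ∈ {lam : ℝ | 0 < lam ∧ ∃ v : Fin ((i : ℕ)+1) → EuclideanSpace ℝ (Fin n),
      (∀ j, v j ∈ Submodule.span ℤ (Set.range b)) ∧ LinearIndependent ℝ v ∧
      ∀ j, ‖v j‖ ≤ lam} := by
    refine ⟨norm_u_pos hu i, fun j => u (Fin.castLE hik j), fun j => humem _, ?_, fun j => ?_⟩
    · exact hu.comp (Fin.castLE hik) (Fin.castLE_injective hik)
    · refine norm_u_mono humem hu humin ?_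
      rw [Fin.le_def]
      exact Nat.lt_succ_iff.mp j.isLt
  have hlb : ∀ lam ∈ {lam : ℝ | 0 < lam ∧ ∃ v : Fin ((i : ℕ)+1) → EuclideanSpace ℝ (Fin n),
      (∀ j, v j ∈ Submodule.span ℤ (Set.range b)) ∧ LinearIndependent ℝ v ∧
      ∀ j, ‖v j‖ ≤ lam}, ‖u i‖ ≤ lam := by
    rintro lam ⟨hlam, v, hvL, hvli, hvnorm⟩
    have hout : ∃ j, v j ∉ span ℝ (u '' {j' | j' < i}) := by
      by_contra hcon
      push_neg at hcon
      have hle : span ℝ (Set.range v) ≤ span ℝ (u '' {j' | j' < i}) :=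
        span_le.mpr (by rintro - ⟨j, rfl⟩; exact hcon j)
      have h1 : finrank ℝ (span ℝ (Set.range v)) = (i : ℕ) + 1 := by
        rw [finrank_span_eq_card hvli, Fintype.card_fin]
      have h2 := finrank_span_lt_le u i
      have := Submodule.finrank_mono hle
      omega
    obtain ⟨j, hj⟩ := hout
    exact le_trans (humin i (v j) (hvL j) hj) (hvnorm j)
  refine le_antisymm (csInf_le ⟨0, fun x hx => hx.1.le⟩ hmem) (le_csInf ⟨_, hmem⟩ hlb)

lemma parseval_inner {n k : ℕ} {g : Fin k → EuclideanSpace ℝ (Fin n)} (hg : Orthonormal ℝ g)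
    {x y : EuclideanSpace ℝ (Fin n)}
    (hx : x ∈ span ℝ (Set.range g)) (hy : y ∈ span ℝ (Set.range g)) :
    ⟪x, y⟫ = ∑ m, ⟪g m, x⟫ * ⟪g m, y⟫ := by
  obtain ⟨a, rfl⟩ := (mem_span_range_iff_exists_fun ℝ).mp hx
  obtain ⟨c, rfl⟩ := (mem_span_range_iff_exists_fun ℝ).mp hy
  have ha : ∀ m, ⟪g m, ∑ i, a i • g i⟫ = a m := fun m => hg.inner_right_fintype a m
  have hc : ∀ m, ⟪g m, ∑ i, c i • g i⟫ = c m := fun m => hg.inner_right_fintype c m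
  simp_rw [ha, hc]
  rw [sum_inner]
  congr 1
  ext i
  rw [real_inner_smul_left, hc]

lemma parseval_norm {n k : ℕ} {g : Fin k → EuclideanSpace ℝ (Fin n)} (hg : Orthonormal ℝ g)
    {x : EuclideanSpace ℝ (Fin n)} (hx : x ∈ span ℝ (Set.range g)) :
    ‖x‖ ^ 2 = ∑ m, ⟪g m, x⟫ ^ 2 := by
  rw [← real_inner_self_eq_norm_sq, parseval_inner hg hx hx]
  simp [sq]

lemma expand_coords {n k : ℕ} {g : Fin k → EuclideanSpace ℝ (Fin n)} (hg : Orthonormal ℝ g)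
    {x : EuclideanSpace ℝ (Fin n)} (hx : x ∈ span ℝ (Set.range g)) :
    x = ∑ m, ⟪g m, x⟫ • g m := by
  obtain ⟨a, rfl⟩ := (mem_span_range_iff_exists_fun ℝ).mp hx
  have ha : ∀ m, ⟪g m, ∑ i, a i • g i⟫ = a m := fun m => hg.inner_right_fintype a m
  simp_rw [ha]

lemma inner_g_eq_zero_of_mem_span {n k : ℕ} {g : Fin k → EuclideanSpace ℝ (Fin n)}
    (hg : Orthonormal ℝ g) {i m : Fin k} (him : i < m)
    {x : EuclideanSpace ℝ (Fin n)} (hx : x ∈ span ℝ (g '' Set.Iic i)) :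
    ⟪g m, x⟫ = 0 := by
  have hle : span ℝ (g '' Set.Iic i) ≤ LinearMap.ker ((innerSL ℝ (g m) : EuclideanSpace ℝ (Fin n) →L[ℝ] ℝ) : EuclideanSpace ℝ (Fin n) →ₗ[ℝ] ℝ) := by
    refine span_le.mpr ?_
    rintro - ⟨j, hj, rfl⟩
    have : ⟪g m, g j⟫ = 0 := hg.2 (lt_of_le_of_lt hj him).ne'
    simpa [LinearMap.mem_ker] using this
  simpa using hle hx

lemma latticeDet_eq_abs_det {n k : ℕ} {g w : Fin k → EuclideanSpace ℝ (Fin n)}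
    (hg : Orthonormal ℝ g) (hw : ∀ i, w i ∈ span ℝ (Set.range g)) :
    latticeDet w = |(Matrix.of fun i m : Fin k => (⟪g m, w i⟫ : ℝ)).det| := by
  have hGram : (Matrix.of fun i j : Fin k => (⟪w i, w j⟫ : ℝ)) =
      (Matrix.of fun i m : Fin k => (⟪g m, w i⟫ : ℝ)) *
      (Matrix.of fun i m : Fin k => (⟪g m, w i⟫ : ℝ)).transpose := by
    ext i j
    rw [Matrix.mul_apply]
    simpa using parseval_inner hg (hw i) (hw j)
  rw [latticeDet, hGram, Matrix.det_mul, Matrix.det_transpose, ← sq, Real.sqrt_sq_eq_abs]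

lemma det_coordM_ne_zero {n k : ℕ} {g w : Fin k → EuclideanSpace ℝ (Fin n)}
    (hg : Orthonormal ℝ g) (hw : ∀ i, w i ∈ span ℝ (Set.range g))
    (hwi : LinearIndependent ℝ w) :
    (Matrix.of fun i m : Fin k => (⟪g m, w i⟫ : ℝ)).det ≠ 0 := by
  intro hdet
  obtain ⟨a, ha0, ha⟩ := (Matrix.exists_vecMul_eq_zero_iff).mpr hdet
  have hx : ∑ i, a i • w i = 0 := by
    have hxcoord : ∀ m, ⟪g m, ∑ i, a i • w i⟫ = 0 := by
      intro m
      have := congrFun ha m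
      rw [Matrix.vecMul, dotProduct] at this
      rw [inner_sum]
      simp_rw [real_inner_smul_right]
      exact this
    have hmem : ∑ i, a i • w i ∈ span ℝ (Set.range g) :=
      Submodule.sum_mem _ fun i _ => Submodule.smul_mem _ _ (hw i)
    have := parseval_norm hg hmem
    simp_rw [hxcoord] at this
    simp only [ne_eq, OfNat.ofNat_ne_zero, not_false_eq_true, zero_pow, Finset.sum_const_zero,
      pow_eq_zero_iff] at this
    exact norm_eq_zero.mp this
  exact ha0 (funext fun i => (Fintype.linearIndependent_iff.mp hwi) a hx i)

lemma latticeDet_pos {n k : ℕ} {g w : Fin k → EuclideanSpace ℝ (Fin n)}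
    (hg : Orthonormal ℝ g) (hw : ∀ i, w i ∈ span ℝ (Set.range g))
    (hwi : LinearIndependent ℝ w) : 0 < latticeDet w := by
  rw [latticeDet_eq_abs_det hg hw]
  exact abs_pos.mpr (det_coordM_ne_zero hg hw hwi)

lemma latticeDet_eq_abs_det_euclidean {k : ℕ} (d : Fin k → EuclideanSpace ℝ (Fin k)) :
    latticeDet d = |(Matrix.of fun i m : Fin k => d i m).det| := by
  have hGram : (Matrix.of fun i j : Fin k => (⟪d i, d j⟫ : ℝ)) =
      (Matrix.of fun i m : Fin k => d i m) *
      (Matrix.of fun i m : Fin k => d i m).transpose := by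
    ext i j
    rw [Matrix.mul_apply]
    simp [PiLp.inner_apply, RCLike.inner_apply, conj_trivial]
    exact Finset.sum_congr rfl fun _ _ => mul_comm _ _
  rw [latticeDet, hGram, Matrix.det_mul, Matrix.det_transpose, ← sq, Real.sqrt_sq_eq_abs]

lemma latticeDet_pos' {k : ℕ} {d : Fin k → EuclideanSpace ℝ (Fin k)}
    (hd : LinearIndependent ℝ d) : 0 < latticeDet d := by
  have hONB := (EuclideanSpace.basisFun (Fin k) ℝ).orthonormal
  have hspan : span ℝ (Set.range ⇑(EuclideanSpace.basisFun (Fin k) ℝ)) = ⊤ := by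
    rw [← OrthonormalBasis.coe_toBasis]
    exact Basis.span_eq _
  exact latticeDet_pos hONB (fun i => by rw [hspan]; exact Submodule.mem_top) hd

lemma succMin_one_le_norm {k : ℕ} {d : Fin k → EuclideanSpace ℝ (Fin k)}
    {x : EuclideanSpace ℝ (Fin k)} (hx : x ∈ span ℤ (Set.range d)) (hx0 : x ≠ 0) :
    succMin d 1 ≤ ‖x‖ := by
  refine csInf_le ⟨0, fun y hy => hy.1.le⟩ ?_
  exact ⟨norm_pos_iff.mpr hx0, fun _ => x, fun _ => hx,
    linearIndependent_unique_iff.mpr hx0, fun _ => le_rfl⟩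

lemma succMin_one_pos {n k : ℕ} (hk : 0 < k) {d : Fin k → EuclideanSpace ℝ (Fin n)}
    (hd : LinearIndependent ℝ d) : 0 < succMin d 1 := by
  obtain ⟨u, humem, hu, humin⟩ := exists_greedy hd
  have h := succMin_eq_greedy humem hu humin ⟨0, hk⟩
  rw [show ((⟨0, hk⟩ : Fin k) : ℕ) + 1 = 1 from rfl] at h
  rw [h]
  exact norm_u_pos hu _

lemma minkowski_first {k : ℕ} (hk : 0 < k) {d : Fin k → EuclideanSpace ℝ (Fin k)}
    (hd : LinearIndependent ℝ d) (hpos : 0 < succMin d 1) :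
    succMin d 1 ^ k * (volume (ball (0 : EuclideanSpace ℝ (Fin k)) 1)).toReal ≤
      2 ^ k * latticeDet d := by
  classical
  haveI : Nonempty (Fin k) := Fin.pos_iff_nonempty.mp hk
  haveI : Nontrivial (EuclideanSpace ℝ (Fin k)) := by
    have : (0 : EuclideanSpace ℝ (Fin k)) ≠ EuclideanSpace.single ⟨0, hk⟩ (1:ℝ) := by
      intro h
      have := congrArg (fun v : EuclideanSpace ℝ (Fin k) => v ⟨0, hk⟩) h
      simp [EuclideanSpace.single_apply] at this
    exact ⟨_, _, this⟩
  set lam := succMin d 1 with hlam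
  set Bd : Basis (Fin k) ℝ (EuclideanSpace ℝ (Fin k)) :=
    basisOfLinearIndependentOfCardEqFinrank hd (by simp [finrank_euclideanSpace_fin]) with hBd
  have hBdcoe : ⇑Bd = d := coe_basisOfLinearIndependentOfCardEqFinrank hd _
  have hcount : Countable (span ℤ (Set.range ⇑Bd)).toAddSubgroup := by
    have : Countable (span ℤ (Set.range ⇑Bd)) := inferInstance
    exact this
  have hball : volume (ball (0 : EuclideanSpace ℝ (Fin k)) lam) ≤
      volume (ZSpan.fundamentalDomain Bd) * 2 ^ k := by
    by_contra hcon
    push_neg at hcon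
    obtain ⟨x, hx0, hxmem⟩ :=
      exists_ne_zero_mem_lattice_of_measure_mul_two_pow_lt_measure
        (ZSpan.isAddFundamentalDomain' Bd volume)
        (fun y hy => by simpa using hy) (convex_ball 0 lam)
        (by rw [finrank_euclideanSpace_fin]; exact hcon)
    have hxL : (x : EuclideanSpace ℝ (Fin k)) ∈ span ℤ (Set.range d) := by
      rw [← hBdcoe]
      exact x.2
    have hxne : (x : EuclideanSpace ℝ (Fin k)) ≠ 0 := by
      simpa using hx0
    have := succMin_one_le_norm hxL hxne
    rw [mem_ball_zero_iff] at hxmem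
    exact absurd hxmem (not_lt.mpr this)
  have hvol_ball : volume (ball (0 : EuclideanSpace ℝ (Fin k)) lam) =
      ENNReal.ofReal (lam ^ k) * volume (ball (0 : EuclideanSpace ℝ (Fin k)) 1) := by
    rw [Measure.addHaar_ball volume 0 hpos.le, finrank_euclideanSpace_fin]
  set Bd₀ := (EuclideanSpace.basisFun (Fin k) ℝ).toBasis with hBd₀
  have hvol_fund : volume (ZSpan.fundamentalDomain Bd) = ENNReal.ofReal (latticeDet d) := by
    rw [ZSpan.measure_fundamentalDomain Bd volume Bd₀]
    have h1 : volume (ZSpan.fundamentalDomain Bd₀) = 1 := by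
      rw [measure_congr (ZSpan.fundamentalDomain_ae_parallelepiped Bd₀ volume)]
      have := (EuclideanSpace.basisFun (Fin k) ℝ).volume_parallelepiped
      rwa [← OrthonormalBasis.coe_toBasis] at this
    rw [h1, mul_one]
    congr 1
    rw [Basis.det_apply, hBdcoe, latticeDet_eq_abs_det_euclidean,
      ← Matrix.det_transpose (Matrix.of fun i m : Fin k => d i m)]
    congr 2
  rw [hvol_ball, hvol_fund] at hball
  have hfin : (ENNReal.ofReal (latticeDet d) * 2 ^ k) ≠ ⊤ :=
    ENNReal.mul_ne_top ENNReal.ofReal_ne_top (by simp)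
  have hDnn : 0 ≤ latticeDet d := Real.sqrt_nonneg _
  have hmono := ENNReal.toReal_mono hfin hball
  rw [ENNReal.toReal_mul, ENNReal.toReal_mul, ENNReal.toReal_ofReal (by positivity),
    ENNReal.toReal_ofReal hDnn, ENNReal.toReal_pow, ENNReal.toReal_ofNat] at hmono
  linarith [hmono]

lemma hermite_bddAbove {k : ℕ} (hk : 0 < k) :
    BddAbove {r : ℝ | ∃ b : Fin k → EuclideanSpace ℝ (Fin k), LinearIndependent ℝ b ∧
      r = succMin b 1 ^ 2 / latticeDet b ^ ((2 : ℝ) / k)} := by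
  set V : ℝ := (volume (ball (0 : EuclideanSpace ℝ (Fin k)) 1)).toReal with hV
  have hVpos : 0 < V := by
    rw [hV]
    refine ENNReal.toReal_pos ?_ measure_ball_lt_top.ne
    exact (measure_ball_pos volume 0 one_pos).ne'
  have hkR : (0:ℝ) < (k:ℝ) := by exact_mod_cast hk
  refine ⟨((2:ℝ) ^ k / V) ^ ((2:ℝ) / k), ?_⟩
  rintro r ⟨d, hd, rfl⟩
  set lam := succMin d 1 with hlam
  have hlamp : 0 < lam := succMin_one_pos hk hd
  have hD : 0 < latticeDet d := latticeDet_pos' hd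
  have hM := minkowski_first hk hd hlamp
  have hQ : (0:ℝ) < 2 ^ k / V := by positivity
  have hkey : lam ^ k ≤ (2 ^ k / V) * latticeDet d := by
    rw [div_mul_eq_mul_div, le_div_iff₀ hVpos]
    linarith [hM]
  have h2 : (lam ^ k : ℝ) ^ ((2:ℝ)/k) ≤ ((2 ^ k / V) * latticeDet d) ^ ((2:ℝ)/k) :=
    Real.rpow_le_rpow (by positivity) hkey (by positivity)
  have h3 : (lam ^ k : ℝ) ^ ((2:ℝ)/k) = lam ^ 2 := by
    rw [← Real.rpow_natCast lam k, ← Real.rpow_mul hlamp.le,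
      show (k:ℝ) * ((2:ℝ)/k) = 2 by field_simp, Real.rpow_two]
  have h4 : ((2 ^ k / V) * latticeDet d) ^ ((2:ℝ)/k) =
      (2 ^ k / V) ^ ((2:ℝ)/k) * latticeDet d ^ ((2:ℝ)/k) :=
    Real.mul_rpow hQ.le hD.le
  rw [h3, h4] at h2
  rw [div_le_iff₀ (Real.rpow_pos_of_pos hD _)]
  exact h2

lemma le_hermite {k : ℕ} (hk : 0 < k) {d : Fin k → EuclideanSpace ℝ (Fin k)}
    (hd : LinearIndependent ℝ d) :
    succMin d 1 ^ 2 ≤ hermiteConstant k * latticeDet d ^ ((2 : ℝ) / k) := by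
  have hD : 0 < latticeDet d := latticeDet_pos' hd
  have hr : succMin d 1 ^ 2 / latticeDet d ^ ((2:ℝ)/k) ≤ hermiteConstant k :=
    le_csSup (hermite_bddAbove hk) ⟨d, hd, rfl⟩
  have hDp : 0 < latticeDet d ^ ((2:ℝ)/k) := Real.rpow_pos_of_pos hD _
  calc succMin d 1 ^ 2 = succMin d 1 ^ 2 / latticeDet d ^ ((2:ℝ)/k) *
        latticeDet d ^ ((2:ℝ)/k) := by field_simp
    _ ≤ hermiteConstant k * latticeDet d ^ ((2:ℝ)/k) :=
        mul_le_mul_of_nonneg_right hr hDp.le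

lemma hermite_pos {k : ℕ} (hk : 0 < k) {d : Fin k → EuclideanSpace ℝ (Fin k)}
    (hd : LinearIndependent ℝ d) : 0 < hermiteConstant k := by
  have hD : 0 < latticeDet d := latticeDet_pos' hd
  have hlamp : 0 < succMin d 1 := succMin_one_pos hk hd
  have hr : succMin d 1 ^ 2 / latticeDet d ^ ((2:ℝ)/k) ≤ hermiteConstant k :=
    le_csSup (hermite_bddAbove hk) ⟨d, hd, rfl⟩
  have hq : 0 < succMin d 1 ^ 2 / latticeDet d ^ ((2:ℝ)/k) := by positivity
  linarith


theorem part1 {n k : ℕ} {b u : Fin k → EuclideanSpace ℝ (Fin n)}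
    (hb : LinearIndependent ℝ b)
    (humem : ∀ i, u i ∈ span ℤ (Set.range b)) (hu : LinearIndependent ℝ u) :
    latticeDet b ≤ ∏ i, ‖u i‖ := by
  classical
  set g := gramSchmidtNormed ℝ u with hgdef
  have hg : Orthonormal ℝ g := gramSchmidtNormed_orthonormal hu
  have hspan_ub : span ℝ (Set.range u) = span ℝ (Set.range b) := by
    refine eq_of_le_of_finrank_le (span_le.mpr ?_) ?_
    · rintro - ⟨i, rfl⟩; exact mem_spanR (humem i)
    · rw [finrank_span_eq_card hb, finrank_span_eq_card hu]
  have hspan_g : span ℝ (Set.range g) = span ℝ (Set.range b) := by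
    rw [hgdef, span_gramSchmidtNormed_range, span_gramSchmidt, hspan_ub]
  have hbmem : ∀ i, b i ∈ span ℝ (Set.range g) := fun i => by
    rw [hspan_g]; exact subset_span (Set.mem_range_self i)
  have humem' : ∀ i, u i ∈ span ℝ (Set.range g) := fun i => by
    rw [hspan_g, ← hspan_ub]; exact subset_span (Set.mem_range_self i)
  set M : Matrix (Fin k) (Fin k) ℝ := Matrix.of fun i m => ⟪g m, b i⟫ with hM
  set Mu : Matrix (Fin k) (Fin k) ℝ := Matrix.of fun i m => ⟪g m, u i⟫ with hMu
  have hz : ∀ i, ∃ z : Fin k → ℤ, ∑ j, z j • b j = u i := fun i =>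
    (mem_span_range_iff_exists_fun ℤ).mp (humem i)
  choose z hzeq using hz
  set Z : Matrix (Fin k) (Fin k) ℤ := Matrix.of fun i j => z i j with hZ
  have hMuZM : Mu = (Z.map (Int.cast : ℤ → ℝ)) * M := by
    ext i m
    rw [Matrix.mul_apply]
    show ⟪g m, u i⟫ = _
    rw [← hzeq i, inner_sum]
    congr 1
    ext j
    rw [← Int.cast_smul_eq_zsmul ℝ, real_inner_smul_right]
    rfl
  have humem_iic : ∀ i : Fin k, u i ∈ span ℝ (g '' Set.Iic i) := by
    intro i
    rw [hgdef, span_gramSchmidtNormed]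
    exact mem_span_gramSchmidt ℝ u le_rfl
  have htri : ∀ i m : Fin k, i < m → Mu i m = 0 := fun i m him =>
    inner_g_eq_zero_of_mem_span hg him (humem_iic i)
  have hblock : Mu.BlockTriangular OrderDual.toDual := by
    intro i m h
    exact htri i m h
  have hdetMu : Mu.det = ∏ i, Mu i i := Matrix.det_of_lowerTriangular Mu hblock
  have hdiag_ne : ∀ i, Mu i i ≠ 0 := by
    intro i h0
    refine u_not_mem_span hu i ?_
    have hexp := expand_coords hg (humem' i)
    have hmem2 : u i ∈ span ℝ (g '' Set.Iio i) := by
      rw [hexp]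
      refine Submodule.sum_mem _ fun m _ => ?_
      rcases lt_trichotomy m i with hmi | heq | hmi
      · exact Submodule.smul_mem _ _ (subset_span ⟨m, hmi, rfl⟩)
      · subst heq
        have h0' : (⟪g m, u m⟫ : ℝ) = 0 := h0
        rw [h0', zero_smul]; exact zero_mem _
      · rw [inner_g_eq_zero_of_mem_span hg hmi (humem_iic i), zero_smul]
        exact zero_mem _
    have hIio : span ℝ (g '' Set.Iio i) = span ℝ (u '' Set.Iio i) := by
      rw [hgdef, span_gramSchmidtNormed, span_gramSchmidt_Iio]
    rw [hIio] at hmem2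
    exact hmem2
  have hdetMu_ne : Mu.det ≠ 0 := by
    rw [hdetMu]
    exact Finset.prod_ne_zero_iff.mpr fun i _ => hdiag_ne i
  have hZr : (Z.map (Int.cast : ℤ → ℝ)).det = ((Z.det : ℤ) : ℝ) :=
    (RingHom.map_det (Int.castRingHom ℝ) Z).symm
  have hZdet_ne : Z.det ≠ 0 := by
    intro h
    rw [hMuZM, Matrix.det_mul, hZr, h] at hdetMu_ne
    simp at hdetMu_ne
  have hZabs : (1 : ℝ) ≤ |((Z.det : ℤ) : ℝ)| := by
    rw [← Int.cast_abs]
    exact_mod_cast Int.one_le_abs hZdet_ne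
  calc latticeDet b = |M.det| := latticeDet_eq_abs_det hg hbmem
    _ ≤ |((Z.det : ℤ) : ℝ)| * |M.det| := le_mul_of_one_le_left (abs_nonneg _) hZabs
    _ = |Mu.det| := by rw [hMuZM, Matrix.det_mul, hZr, abs_mul]
    _ = ∏ i, |Mu i i| := by rw [hdetMu, Finset.abs_prod]
    _ ≤ ∏ i, ‖u i‖ := by
        refine Finset.prod_le_prod (fun i _ => abs_nonneg _) fun i _ => ?_
        have := abs_real_inner_le_norm (g i) (u i)
        rwa [hg.1 i, one_mul] at this

theorem part2 {b u : Fin k → EuclideanSpace ℝ (Fin n)} (hk : 0 < k)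
    (hb : LinearIndependent ℝ b)
    (humem : ∀ i, u i ∈ span ℤ (Set.range b)) (hu : LinearIndependent ℝ u)
    (humin : ∀ i : Fin k, ∀ x ∈ span ℤ (Set.range b),
      x ∉ span ℝ (u '' {j | j < i}) → ‖u i‖ ≤ ‖x‖) :
    (∏ i, ‖u i‖) ≤ hermiteConstant k ^ ((k : ℝ) / 2) * latticeDet b := by
  classical
  set g := gramSchmidtNormed ℝ u with hgdef
  have hg : Orthonormal ℝ g := gramSchmidtNormed_orthonormal hu
  have hspan_ub : span ℝ (Set.range u) = span ℝ (Set.range b) := by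
    refine eq_of_le_of_finrank_le (span_le.mpr ?_) ?_
    · rintro - ⟨i, rfl⟩; exact mem_spanR (humem i)
    · rw [finrank_span_eq_card hb, finrank_span_eq_card hu]
  have hspan_g : span ℝ (Set.range g) = span ℝ (Set.range b) := by
    rw [hgdef, span_gramSchmidtNormed_range, span_gramSchmidt, hspan_ub]
  have hbmem : ∀ i, b i ∈ span ℝ (Set.range g) := fun i => by
    rw [hspan_g]; exact subset_span (Set.mem_range_self i)
  have hupos : ∀ i, 0 < ‖u i‖ := fun i => norm_pos_iff.mpr (hu.ne_zero i)
  set imax : Fin k := ⟨k - 1, by omega⟩ with himax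
  have hletop : ∀ i : Fin k, i ≤ imax := fun i => by
    rw [Fin.le_def]
    show (i : ℕ) ≤ k - 1
    have := i.isLt
    omega
  have humono : ∀ {i j : Fin k}, i ≤ j → ‖u i‖ ≤ ‖u j‖ := by
    intro i j hij
    rcases eq_or_lt_of_le hij with rfl | hij'
    · exact le_rfl
    · refine humin i (u j) (humem j) fun hmem => ?_
      exact hu.notMem_span_image (s := {j'' | j'' < j}) (by simp) (span_mono
        (Set.image_mono (f := u) fun a (ha : a < i) => lt_trans ha hij') hmem)
  set Lmax : ℝ := ‖u imax‖ with hLmax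
  have hLmaxpos : 0 < Lmax := hupos imax
  set φ : Fin k → ℝ := fun m => Lmax / ‖u m‖ with hφ
  have hφpos : ∀ m, 0 < φ m := fun m => div_pos hLmaxpos (hupos m)
  set fC : EuclideanSpace ℝ (Fin n) →ₗ[ℝ] EuclideanSpace ℝ (Fin k) :=
    { toFun := fun x => toE (fun m => φ m * ⟪g m, x⟫)
      map_add' := by
        intro x y
        ext m
        show φ m * ⟪g m, x + y⟫ = φ m * ⟪g m, x⟫ + φ m * ⟪g m, y⟫
        rw [inner_add_right]; ring
      map_smul' := by
        intro r x
        ext m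
        show φ m * ⟪g m, r • x⟫ = r * (φ m * ⟪g m, x⟫)
        rw [real_inner_smul_right]; ring } with hfCdef
  have hfC_apply : ∀ x m, fC x m = φ m * ⟪g m, x⟫ := fun x m => rfl
  have hker : ∀ x ∈ span ℝ (Set.range b), fC x = 0 → x = 0 := by
    intro x hx hfx
    have hcoord : ∀ m, ⟪g m, x⟫ = 0 := by
      intro m
      have h0 : φ m * ⟪g m, x⟫ = 0 := by
        have : fC x m = (0 : EuclideanSpace ℝ (Fin k)) m := by rw [hfx]
        simpa [hfC_apply] using this
      rcases mul_eq_zero.mp h0 with h | h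
      · exact absurd h (hφpos m).ne'
      · exact h
    have hx' : x ∈ span ℝ (Set.range g) := by rwa [hspan_g]
    have hns := parseval_norm hg hx'
    simp_rw [hcoord] at hns
    simp only [ne_eq, OfNat.ofNat_ne_zero, not_false_eq_true, zero_pow,
      Finset.sum_const_zero, pow_eq_zero_iff] at hns
    exact norm_eq_zero.mp hns
  set c : Fin k → EuclideanSpace ℝ (Fin k) := fun i => fC (b i) with hcdef
  have hcli : LinearIndependent ℝ c := by
    refine hb.map (f := fC) ?_
    rw [Submodule.disjoint_def]
    intro x hx hker'
    exact hker x hx (LinearMap.mem_ker.mp hker')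
  have hlatt : ∀ y ∈ span ℤ (Set.range c), ∃ x ∈ span ℤ (Set.range b), fC x = y := by
    intro y hy
    obtain ⟨z, rfl⟩ := (mem_span_range_iff_exists_fun ℤ).mp hy
    refine ⟨∑ i, z i • b i, ?_, ?_⟩
    · exact Submodule.sum_mem _ fun i _ =>
        Submodule.smul_mem _ _ (subset_span (Set.mem_range_self i))
    · rw [map_sum]
      exact Finset.sum_congr rfl fun i _ => map_zsmul fC (z i) (b i)
  -- lower bound for the first minimum of the c-lattice
  have hlam1 : Lmax ≤ succMin c 1 := by
    refine le_csInf ⟨‖c imax‖, norm_pos_iff.mpr (hcli.ne_zero imax), fun _ => c imax,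
      fun _ => subset_span (Set.mem_range_self imax),
      linearIndependent_unique_iff.mpr (hcli.ne_zero imax), fun _ => le_rfl⟩ ?_
    rintro lam ⟨hlam, v, hvL, hvli, hvnorm⟩
    obtain ⟨x, hxL, hxy⟩ := hlatt (v 0) (hvL 0)
    have hy0 : v 0 ≠ 0 := hvli.ne_zero 0
    have hx0 : x ≠ 0 := by rintro rfl; rw [map_zero] at hxy; exact hy0 hxy.symm
    have hxRb : x ∈ span ℝ (Set.range b) := mem_spanR hxL
    have hTne : x ∈ span ℝ (u '' Set.Iic imax) := by
      have : Set.Iic imax = Set.univ := Set.eq_univ_of_forall fun i => hletop i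
      rw [this, Set.image_univ, hspan_ub]
      exact hxRb
    obtain ⟨j, hjT, hjmin⟩ := Set.exists_min_image {i : Fin k | x ∈ span ℝ (u '' Set.Iic i)}
      id (Set.toFinite _) ⟨imax, hTne⟩
    have hnotmem : x ∉ span ℝ (u '' {j' | j' < j}) := by
      intro hmem
      by_cases hj0 : (j : ℕ) = 0
      · have hempty : {j' : Fin k | j' < j} = ∅ := by
          ext a; simp [Fin.lt_def, hj0]
        rw [hempty, Set.image_empty, span_empty, mem_bot] at hmem
        exact hx0 hmem
      · set j' : Fin k := ⟨(j : ℕ) - 1, by omega⟩ with hj'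
        have hsub : {j'' : Fin k | j'' < j} ⊆ Set.Iic j' := by
          intro a ha
          rw [Set.mem_Iic, Fin.le_def]
          have : (a : ℕ) < (j : ℕ) := ha
          simp only [hj']
          omega
        have hjj : j ≤ j' := hjmin j' (span_mono (Set.image_mono (f := u) hsub) hmem)
        rw [Fin.le_def] at hjj
        simp only [hj'] at hjj
        omega
    have hxnorm : ‖u j‖ ≤ ‖x‖ := humin j x hxL hnotmem
    have hcoordvanish : ∀ m, j < m → ⟪g m, x⟫ = 0 := by
      intro m hm
      refine inner_g_eq_zero_of_mem_span hg hm ?_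
      have hIic : span ℝ (g '' Set.Iic j) = span ℝ (u '' Set.Iic j) := by
        rw [hgdef, span_gramSchmidtNormed, span_gramSchmidt_Iic]
      rw [hIic]
      exact hjT
    have hxg : x ∈ span ℝ (Set.range g) := by rwa [hspan_g]
    have hynorm : ‖v 0‖ ^ 2 = ∑ m, (φ m * ⟪g m, x⟫) ^ 2 := by
      rw [← hxy, ← real_inner_self_eq_norm_sq, PiLp.inner_apply]
      refine Finset.sum_congr rfl fun m _ => ?_
      rw [hfC_apply]
      simp [RCLike.inner_apply, conj_trivial, sq]
      rw [← abs_mul, abs_mul_abs_self]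
    have hkey : Lmax ^ 2 ≤ ‖v 0‖ ^ 2 := by
      have hterm : ∀ m, (Lmax / ‖u j‖) ^ 2 * ⟪g m, x⟫ ^ 2 ≤ (φ m * ⟪g m, x⟫) ^ 2 := by
        intro m
        rcases le_or_gt m j with hmj | hmj
        · rw [mul_pow]
          refine mul_le_mul_of_nonneg_right ?_ (sq_nonneg _)
          refine pow_le_pow_left₀ (by positivity) ?_ 2
          exact div_le_div_of_nonneg_left hLmaxpos.le (hupos m) (humono hmj)
        · rw [hcoordvanish m hmj]
          simp
      have huj0 : ‖u j‖ ≠ 0 := (hupos j).ne'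
      calc Lmax ^ 2 = (Lmax / ‖u j‖) ^ 2 * ‖u j‖ ^ 2 := by
            field_simp
        _ ≤ (Lmax / ‖u j‖) ^ 2 * ‖x‖ ^ 2 := by
            refine mul_le_mul_of_nonneg_left ?_ (sq_nonneg _)
            exact pow_le_pow_left₀ (norm_nonneg _) hxnorm 2
        _ = ∑ m, (Lmax / ‖u j‖) ^ 2 * ⟪g m, x⟫ ^ 2 := by
            rw [parseval_norm hg hxg, Finset.mul_sum]
        _ ≤ ∑ m, (φ m * ⟪g m, x⟫) ^ 2 := Finset.sum_le_sum fun m _ => hterm m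
        _ = ‖v 0‖ ^ 2 := hynorm.symm
    have hfin : Lmax ≤ ‖v 0‖ := by
      by_contra hcon
      push_neg at hcon
      have : ‖v 0‖ ^ 2 < Lmax ^ 2 := pow_lt_pow_left₀ hcon (norm_nonneg _) (by norm_num)
      linarith
    exact hfin.trans (hvnorm 0)
  -- determinant of the c-lattice
  have hkR : (0:ℝ) < (k:ℝ) := by exact_mod_cast hk
  set M : Matrix (Fin k) (Fin k) ℝ := Matrix.of fun i m => ⟪g m, b i⟫ with hM
  have hDb : latticeDet b = |M.det| := latticeDet_eq_abs_det hg hbmem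
  have hDbpos : 0 < latticeDet b := by
    rw [hDb]; exact abs_pos.mpr (det_coordM_ne_zero hg hbmem hb)
  have hN : (Matrix.of fun i m : Fin k => (c i) m) = M * Matrix.diagonal φ := by
    ext i m
    rw [Matrix.mul_diagonal]
    show φ m * ⟪g m, b i⟫ = M i m * φ m
    simp only [hM, Matrix.of_apply]
    ring
  have hφprodpos : 0 < ∏ m, φ m := Finset.prod_pos fun m _ => hφpos m
  have hDc : latticeDet c = (∏ m, φ m) * latticeDet b := by
    rw [latticeDet_eq_abs_det_euclidean c, hN, Matrix.det_mul, Matrix.det_diagonal, abs_mul,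
      abs_of_pos hφprodpos, hDb]
    ring
  set γ := hermiteConstant k with hγ
  have hγpos : 0 < γ := hermite_pos hk hcli
  have hHer := le_hermite hk hcli
  set t : ℝ := (2:ℝ)/(k:ℝ) with ht
  have htpos : 0 < t := div_pos (by norm_num) hkR
  set P : ℝ := ∏ i, ‖u i‖ with hP
  have hPpos : 0 < P := Finset.prod_pos fun i _ => hupos i
  have hprodφ : ∏ m, φ m = Lmax ^ k / P := by
    rw [hP, hφ]
    rw [Finset.prod_div_distrib, Finset.prod_const, Finset.card_univ, Fintype.card_fin]
  have hLle : Lmax ^ 2 ≤ γ * (latticeDet c) ^ t :=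
    le_trans (pow_le_pow_left₀ hLmaxpos.le hlam1 2) hHer
  have hcalc : (latticeDet c) ^ t = Lmax ^ 2 * (latticeDet b / P) ^ t := by
    rw [hDc, hprodφ]
    have h1 : Lmax ^ k / P * latticeDet b = (Lmax ^ k) * (latticeDet b / P) := by ring
    rw [h1, Real.mul_rpow (pow_nonneg hLmaxpos.le k) (div_pos hDbpos hPpos).le]
    congr 1
    rw [← Real.rpow_natCast Lmax k, ← Real.rpow_mul hLmaxpos.le,
      show (k:ℝ) * t = 2 by rw [ht]; field_simp, Real.rpow_two]
  rw [hcalc] at hLle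
  have hz : (0:ℝ) < (latticeDet b / P) ^ t :=
    Real.rpow_pos_of_pos (div_pos hDbpos hPpos) t
  have hone : 1 ≤ γ * (latticeDet b / P) ^ t := by
    have hL2 : (0:ℝ) < Lmax ^ 2 := by positivity
    have h2 : Lmax ^ 2 * 1 ≤ Lmax ^ 2 * (γ * (latticeDet b / P) ^ t) := by
      rw [mul_one]
      calc Lmax ^ 2 ≤ γ * (Lmax ^ 2 * (latticeDet b / P) ^ t) := hLle
        _ = Lmax ^ 2 * (γ * (latticeDet b / P) ^ t) := by ring
    exact (mul_le_mul_iff_right₀ hL2).mp h2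
  have hPD : (P / latticeDet b) ^ t ≤ γ := by
    have hinv : (P / latticeDet b) = (latticeDet b / P)⁻¹ := by
      rw [inv_div]
    rw [hinv, Real.inv_rpow (div_pos hDbpos hPpos).le, ← one_div, div_le_iff₀ hz]
    linarith [hone]
  have hfinal : P / latticeDet b ≤ γ ^ ((k:ℝ)/2) := by
    have h1 : ((P / latticeDet b) ^ t) ^ ((k:ℝ)/2) ≤ γ ^ ((k:ℝ)/2) :=
      Real.rpow_le_rpow (Real.rpow_nonneg (div_pos hPpos hDbpos).le t) hPD
        (by positivity)
    rwa [← Real.rpow_mul (div_pos hPpos hDbpos).le,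
      show t * ((k:ℝ)/2) = 1 by rw [ht]; field_simp, Real.rpow_one] at h1
  rw [div_le_iff₀ hDbpos] at hfinal
  exact hfinal


end MinkAux

/-- Minkowski's second theorem for balls, (8):
`det(L) ≤ ∏_{i=1}^k λ_i(B, L) ≤ γ_k^{k/2} det(L)`. -/
theorem det_le_prod_succMin_le {n k : ℕ} (hk : 0 < k)
    (b : Fin k → EuclideanSpace ℝ (Fin n)) (hb : LinearIndependent ℝ b) :
    latticeDet b ≤ (∏ i : Fin k, succMin b ((i : ℕ) + 1)) ∧
    (∏ i : Fin k, succMin b ((i : ℕ) + 1)) ≤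
      hermiteConstant k ^ ((k : ℝ) / 2) * latticeDet b := by
  obtain ⟨u, humem, hu, humin⟩ := MinkAux.exists_greedy hb
  have heq : ∀ i : Fin k, succMin b ((i : ℕ) + 1) = ‖u i‖ := fun i =>
    MinkAux.succMin_eq_greedy humem hu humin i
  have hprod : (∏ i : Fin k, succMin b ((i : ℕ) + 1)) = ∏ i, ‖u i‖ :=
    Finset.prod_congr rfl fun i _ => heq i
  constructor
  · rw [hprod]
    exact MinkAux.part1 hb humem hu
  · rw [hprod]
    exact MinkAux.part2 hk hb humem hu humin

end
end

section
/- Let A ∈ ℤ^{m×n} (1 ≤ m < n) satisfy: gcd of all m×m minors of A is 1, and {x ∈ ℝⁿ_{≥0} : Ax = 0} = {0}. Let v be the sum of the columns of A and C the cone generated by the columns. If b ∈ (2^{(n−m)/2−1} p(m,n) √(det(A Aᵀ)) · v + C) ∩ ℤ^m, where p(m,n) = ((n−m)n/2)^{1/2}, then P(A,b) = {x ∈ ℝⁿ_{≥0} : Ax = b} contains an integer point. -/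
noncomputable section

open scoped BigOperators RealInnerProductSpace Pointwise

section Aux


open Matrix in
lemma psd_one_le_det_one_add {m : ℕ} {S : Matrix (Fin m) (Fin m) ℝ}
    (hS : S.PosSemidef) : 1 ≤ (1 + S).det := by
  have hH : (1 + S).IsHermitian := Matrix.isHermitian_one.add hS.1
  have key : ∀ i, 1 ≤ hH.eigenvalues i := by
    intro i
    set v : Fin m → ℝ := (WithLp.equiv 2 _) (hH.eigenvectorBasis i) with hv
    have hmv := hH.mulVec_eigenvectorBasis i
    have hSv : S.mulVec v = (hH.eigenvalues i - 1) • v := by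
      have h1 : (1 + S).mulVec v = v + S.mulVec v := by
        rw [Matrix.add_mulVec, Matrix.one_mulVec]
      change (1 + S).mulVec v = hH.eigenvalues i • v at hmv
      rw [h1] at hmv
      have : S.mulVec v = hH.eigenvalues i • v - v := by
        rw [← hmv]; abel
      rw [this, sub_smul, one_smul]
    have hvne : v ≠ 0 := by
      intro h0
      have := hH.eigenvectorBasis.orthonormal.1 i
      rw [show hH.eigenvectorBasis i = 0 from (WithLp.equiv 2 _).injective h0] at this
      simp at this
    have hvv : 0 < dotProduct v v := by
      rcases lt_or_eq_of_le (Finset.sum_nonneg fun j _ => mul_self_nonneg (v j)) with h | h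
      · exact h
      · exact absurd (dotProduct_self_eq_zero.1 h.symm) hvne
    have h0 : 0 ≤ dotProduct (star v) (S.mulVec v) := hS.dotProduct_mulVec_nonneg v
    rw [hSv] at h0
    simp only [star_trivial, dotProduct_smul, smul_eq_mul] at h0
    nlinarith
  rw [hH.det_eq_prod_eigenvalues]
  have : (1:ℝ) ≤ ∏ i, hH.eigenvalues i := by
    calc (1:ℝ) = ∏ _i : Fin m, 1 := by simp
    _ ≤ ∏ i, hH.eigenvalues i :=
      Finset.prod_le_prod (fun _ _ => zero_le_one) (fun i _ => key i)
  simpa using this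


lemma psd_det_nonneg {m : ℕ} {S : Matrix (Fin m) (Fin m) ℝ}
    (hS : S.PosSemidef) : 0 ≤ S.det := by
  rw [hS.1.det_eq_prod_eigenvalues]
  have : (0:ℝ) ≤ ∏ i, hS.1.eigenvalues i :=
    Finset.prod_nonneg fun i _ => hS.eigenvalues_nonneg i
  simpa using this

/-- transpose PSD versions -/
lemma psd_mul_transpose {p q : ℕ} (B : Matrix (Fin p) (Fin q) ℝ) :
    (B * B.transpose).PosSemidef := by
  have := Matrix.posSemidef_self_mul_conjTranspose B
  rwa [Matrix.conjTranspose_eq_transpose_of_trivial] at this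

lemma minor_sq_le_det_mul_transpose {m n : ℕ} (hmn : m ≤ n)
    (A : Matrix (Fin m) (Fin n) ℝ) (g : Fin m → Fin n) (hg : Function.Injective g) :
    ((A.submatrix id g).det) ^ 2 ≤ (A * A.transpose).det := by
  classical
  set k := n - m with hk
  -- complement enumeration
  set sc : Finset (Fin n) := (Finset.univ.image g)ᶜ with hsc
  have hcard : sc.card = k := by
    rw [hsc, Finset.card_compl, Finset.card_image_of_injective _ hg]
    simp [hk]
  set g' : Fin k → Fin n := fun i => ((sc.orderIsoOfFin hcard) i : Fin n) with hg'
  have hg'i : Function.Injective g' := fun a b h => by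
    have := (sc.orderIsoOfFin hcard).injective (Subtype.ext h); exact this
  have hg'mem : ∀ i, g' i ∈ sc := fun i => ((sc.orderIsoOfFin hcard) i).2
  have hbij : Function.Bijective (Sum.elim g g') := by
    rw [Fintype.bijective_iff_injective_and_card]
    constructor
    · rintro (a | a) (b | b) h
      · simp only [Sum.elim_inl] at h; exact congrArg Sum.inl (hg h)
      · exfalso
        have h1 : g a ∈ Finset.univ.image g := Finset.mem_image_of_mem g (Finset.mem_univ a)
        have h2 := hg'mem b
        rw [hsc, Finset.mem_compl] at h2
        have h' : g a = g' b := h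
        exact h2 (h' ▸ h1)
      · exfalso
        have h1 : g b ∈ Finset.univ.image g := Finset.mem_image_of_mem g (Finset.mem_univ b)
        have h2 := hg'mem a
        rw [hsc, Finset.mem_compl] at h2
        have h' : g' a = g b := h
        exact h2 (h'.symm ▸ h1)
      · simp only [Sum.elim_inr] at h; exact congrArg Sum.inr (hg'i h)
    · simp [hk, Nat.add_sub_cancel' hmn]
  set B := A.submatrix id g with hB
  set C := A.submatrix id g' with hC
  have hsplit : A * A.transpose = B * B.transpose + C * C.transpose := by
    ext r r'
    simp only [Matrix.mul_apply, Matrix.add_apply, Matrix.transpose_apply,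
      Matrix.submatrix_apply, id_eq, hB, hC]
    rw [← Fintype.sum_bijective (Sum.elim g g') hbij
      (fun x => A r (Sum.elim g g' x) * A r' (Sum.elim g g' x))
      (fun c => A r c * A r' c) (fun x => rfl)]
    rw [Fintype.sum_sum_type]
    simp
  by_cases hdB : B.det = 0
  · rw [hdB, hsplit]
    have : (B * B.transpose + C * C.transpose).PosSemidef :=
      (psd_mul_transpose B).add (psd_mul_transpose C)
    simpa using psd_det_nonneg this
  · have hU : IsUnit B.det := isUnit_iff_ne_zero.2 hdB
    set R := B⁻¹ * C with hR
    have key : A * A.transpose = B * (1 + R * R.transpose) * B.transpose := by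
      rw [hsplit, mul_add, add_mul, mul_one]
      congr 1
      rw [hR, Matrix.transpose_mul, Matrix.transpose_nonsing_inv]
      have : B * (B⁻¹ * C * (C.transpose * B.transpose⁻¹)) * B.transpose
          = (B * B⁻¹) * (C * C.transpose) * (B.transpose⁻¹ * B.transpose) := by
        simp only [Matrix.mul_assoc]
      rw [this, Matrix.mul_nonsing_inv _ hU, Matrix.nonsing_inv_mul _ (by simpa using hU)]
      simp
    rw [key, Matrix.det_mul, Matrix.det_mul, Matrix.det_transpose]
    have h1 : 1 ≤ (1 + R * R.transpose).det := psd_one_le_det_one_add (psd_mul_transpose R)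
    nlinarith [sq_nonneg B.det]



lemma gcd_mem_span {β : Type*} [DecidableEq β] (s : Finset β) (f : β → ℤ) :
    s.gcd f ∈ Ideal.span (↑(s.image f) : Set ℤ) := by
  classical
  induction s using Finset.induction_on with
  | empty => simp
  | insert _ _ hnotmem ih =>
    rename_i a s
    rw [Finset.gcd_insert]
    have hx : f a ∈ Ideal.span (↑((insert a s).image f) : Set ℤ) := by
      apply Ideal.subset_span
      simp
    have hy : s.gcd f ∈ Ideal.span (↑((insert a s).image f) : Set ℤ) := by
      refine Ideal.span_mono ?_ ih
      intro x hx
      simp only [Finset.coe_image, Set.mem_image] at hx ⊢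
      obtain ⟨b, hb, rfl⟩ := hx
      exact ⟨b, by simp [Finset.mem_insert, hb], rfl⟩
    have hbez : gcd (f a) (s.gcd f) =
        f a * Int.gcdA (f a) (s.gcd f) + s.gcd f * Int.gcdB (f a) (s.gcd f) := by
      rw [← Int.gcd_eq_gcd_ab, Int.coe_gcd]
    rw [hbez]
    exact Ideal.add_mem _ (Ideal.mul_mem_right _ _ hx) (Ideal.mul_mem_right _ _ hy)

lemma exists_int_solution {m n : ℕ} (A : Matrix (Fin m) (Fin n) ℤ)
    (hgcd : minorGcd A = 1) (b : Fin m → ℤ) : ∃ u : Fin n → ℤ, A.mulVec u = b := by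
  classical
  set Sol : Submodule ℤ (Fin m → ℤ) := LinearMap.range A.mulVecLin with hSol
  -- step 1 : minors • y are attainable
  have claim1 : ∀ (g : Fin m → Fin n) (y : Fin m → ℤ),
      ((A.submatrix id g).det • y) ∈ Sol := by
    intro g y
    set B := A.submatrix id g with hB
    set w := B.adjugate.mulVec y with hw
    refine ⟨fun c => ∑ i, if g i = c then w i else 0, ?_⟩
    have : A.mulVecLin (fun c => ∑ i, if g i = c then w i else 0) = B.mulVec w := by
      funext r
      simp only [Matrix.mulVecLin_apply, Matrix.mulVec, dotProduct,
        Matrix.submatrix_apply, id_eq, hB]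
      simp_rw [Finset.mul_sum, mul_ite, mul_zero]
      rw [Finset.sum_comm]
      simp [Finset.sum_ite_eq]
    rw [this, hw, Matrix.mulVec_mulVec, Matrix.mul_adjugate, Matrix.smul_mulVec,
      Matrix.one_mulVec]
  -- step 2: each unit vector is attainable
  have claim2 : ∀ r : Fin m, Pi.single r (1:ℤ) ∈ Sol := by
    intro r
    set I : Ideal ℤ := Submodule.comap (LinearMap.toSpanSingleton ℤ _ (Pi.single r (1:ℤ))) Sol
      with hI
    have hδ : ∀ s : Finset (Fin n), ∀ h : s.card = m,
        (A.submatrix id fun j => ((s.orderIsoOfFin h) j : Fin n)).det ∈ I := by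
      intro s h
      exact claim1 (fun j => ((s.orderIsoOfFin h) j : Fin n)) (Pi.single r 1)
    have hspan : Ideal.span
        (↑(((Finset.univ.filter fun s : Finset (Fin n) => s.card = m)).image
          fun s => if h : s.card = m then
            (A.submatrix id fun j => ((s.orderIsoOfFin h) j : Fin n)).det else 0) : Set ℤ)
        ≤ I := by
      rw [Ideal.span_le]
      intro x hx
      simp only [Finset.coe_image, Set.mem_image, Finset.mem_coe, Finset.mem_filter] at hx
      obtain ⟨s, ⟨-, hcard⟩, rfl⟩ := hx
      rw [dif_pos hcard]
      exact hδ s hcard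
    have h1 : (1:ℤ) ∈ I := by
      have := gcd_mem_span (Finset.univ.filter fun s : Finset (Fin n) => s.card = m)
        (fun s => if h : s.card = m then
          (A.submatrix id fun j => ((s.orderIsoOfFin h) j : Fin n)).det else 0)
      rw [show (Finset.gcd _ _ : ℤ) = minorGcd A from rfl, hgcd] at this
      exact hspan this
    have := h1
    rw [hI, Submodule.mem_comap] at this
    simpa using this
  -- step 3: build solution for b
  have hb : b ∈ Sol := by
    have : b = ∑ r : Fin m, b r • Pi.single r (1:ℤ) := by
      funext j
      simp [Pi.single_apply, Finset.sum_apply]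
    rw [this]
    exact Submodule.sum_mem _ fun r _ => Submodule.smul_mem _ _ (claim2 r)
  obtain ⟨u, hu⟩ := hb
  exact ⟨u, hu⟩


section KerVec
variable {m n : ℕ} (A : Matrix (Fin m) (Fin n) ℤ) (g : Fin m → Fin n) (j0 : Fin n)

def kerVec : Fin n → ℤ :=
  fun c => ∑ q : Fin (m+1), if Fin.cases j0 g q = c
    then (-1)^(q:ℕ) * (A.submatrix id (Fin.cases j0 g ∘ q.succAbove)).det else 0

variable {g j0}

lemma casesInj (hg : Function.Injective g) (hj0 : j0 ∉ Set.range g) :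
    Function.Injective (Fin.cases j0 g : Fin (m+1) → Fin n) := by
  intro a b h
  rcases Fin.eq_zero_or_eq_succ a with rfl | ⟨a', rfl⟩ <;>
    rcases Fin.eq_zero_or_eq_succ b with rfl | ⟨b', rfl⟩ <;>
    simp only [Fin.cases_zero, Fin.cases_succ] at h
  · rfl
  · exact absurd ⟨b', h.symm⟩ hj0
  · exact absurd ⟨a', h⟩ hj0
  · exact congrArg Fin.succ (hg h)

lemma kerVec_mulVec (hg : Function.Injective g) (hj0 : j0 ∉ Set.range g) :
    A.mulVec (kerVec A g j0) = 0 := by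
  funext r
  have hM : (A.submatrix (Fin.cases r id) (Fin.cases j0 g)).det = 0 := by
    apply Matrix.det_zero_of_row_eq (i := 0) (j := r.succ) (Fin.succ_ne_zero r).symm
    funext q
    simp [Matrix.submatrix_apply]
  rw [Matrix.det_succ_row_zero] at hM
  have hrow : ∀ q : Fin (m+1),
      (A.submatrix (Fin.cases r id) (Fin.cases j0 g)).submatrix Fin.succ q.succAbove
        = A.submatrix id (Fin.cases j0 g ∘ q.succAbove) := by
    intro q
    ext i j
    simp [Matrix.submatrix_apply]
  simp only [Matrix.submatrix_apply, Fin.cases_zero] at hM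
  simp_rw [hrow] at hM
  have : (A.mulVec (kerVec A g j0)) r
      = ∑ q : Fin (m+1), (-1)^(q:ℕ) * A r (Fin.cases j0 g q)
          * (A.submatrix id (Fin.cases j0 g ∘ q.succAbove)).det := by
    simp only [Matrix.mulVec, dotProduct, kerVec]
    simp_rw [Finset.mul_sum, mul_ite, mul_zero]
    rw [Finset.sum_comm]
    simp only [Finset.sum_ite_eq, Finset.mem_univ, if_true]
    congr 1; funext q; ring
  rw [this, hM]
  rfl

lemma kerVec_apply_j0 (hg : Function.Injective g) (hj0 : j0 ∉ Set.range g) :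
    kerVec A g j0 j0 = (A.submatrix id g).det := by
  have hf := casesInj hg hj0
  rw [kerVec]
  rw [Finset.sum_eq_single 0]
  · have hcomp : ((fun i => Fin.cases j0 g i) ∘ Fin.succ : Fin m → Fin n) = g := by
      funext i
      simp
    have hcomp2 : (Fin.cases j0 g ∘ Fin.succAbove 0 : Fin m → Fin n) = g := by
      funext i
      simp [Fin.succAbove_zero]
    simp [hcomp, hcomp2]
  · intro q _ hq
    rw [if_neg]
    intro h
    exact hq (hf (h.trans (by simp)))
  · intro h; exact absurd (Finset.mem_univ 0) h

lemma kerVec_apply_notmem (hc1 : c ≠ j0) (hc2 : c ∉ Set.range g) :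
    kerVec A g j0 c = 0 := by
  rw [kerVec]
  apply Finset.sum_eq_zero
  intro q _
  rw [if_neg]
  intro h
  rcases Fin.eq_zero_or_eq_succ q with rfl | ⟨q', rfl⟩
  · exact hc1 (by simpa using h.symm)
  · exact hc2 ⟨q', by simpa using h⟩

lemma kerVec_cases (hg : Function.Injective g) (hj0 : j0 ∉ Set.range g) (c : Fin n) :
    kerVec A g j0 c = 0 ∨ ∃ h : Fin m → Fin n, Function.Injective h ∧
      (kerVec A g j0 c = (A.submatrix id h).det ∨
       kerVec A g j0 c = -(A.submatrix id h).det) := by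
  have hf := casesInj hg hj0
  by_cases hex : ∃ q : Fin (m+1), Fin.cases j0 g q = c
  · obtain ⟨q, hq⟩ := hex
    right
    refine ⟨Fin.cases j0 g ∘ q.succAbove, hf.comp (Fin.succAbove_right_injective), ?_⟩
    have : kerVec A g j0 c
        = (-1)^(q:ℕ) * (A.submatrix id (Fin.cases j0 g ∘ q.succAbove)).det := by
      rw [kerVec, Finset.sum_eq_single q]
      · rw [if_pos hq]
      · intro q' _ hq'
        rw [if_neg]; intro h; exact hq' (hf (h.trans hq.symm))
      · intro h; exact absurd (Finset.mem_univ q) h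
    rcases Nat.even_or_odd (q:ℕ) with he | ho
    · left; rw [this, he.neg_one_pow, one_mul]
    · right; rw [this, ho.neg_one_pow, neg_one_mul]
  · left
    push_neg at hex
    apply kerVec_apply_notmem (A := A)
    · exact fun h => (hex 0) (by simpa using h.symm)
    · rintro ⟨i, hi⟩; exact (hex i.succ) (by simpa using hi)
end KerVec

lemma numeric_ineq {m n : ℕ} (hm : 1 ≤ m) (hmn : m < n) (d : ℝ) (hd : 0 ≤ d) :
    ((n:ℝ) - m) * (d/2) ≤
      (2 : ℝ) ^ (((n : ℝ) - m) / 2 - 1) * Real.sqrt (((n : ℝ) - m) * n / 2) * d := by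
  set K : ℝ := (n:ℝ) - m with hK
  have hK1 : (1:ℝ) ≤ K := by
    rw [hK]
    have : (m:ℝ) + 1 ≤ (n:ℝ) := by exact_mod_cast hmn
    linarith
  have hK0 : (0:ℝ) ≤ K := by linarith
  have hKn : K ≤ (n:ℝ) := by
    rw [hK]
    have : (0:ℝ) ≤ (m:ℝ) := Nat.cast_nonneg m
    linarith
  have h1 : Real.sqrt (K*K/2) ≤ Real.sqrt (K*(n:ℝ)/2) := by
    apply Real.sqrt_le_sqrt
    have h : K*K ≤ K*(n:ℝ) := mul_le_mul_of_nonneg_left hKn hK0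
    nlinarith
  have h2 : Real.sqrt (K*K/2) = K / Real.sqrt 2 := by
    rw [Real.sqrt_div (by positivity), Real.sqrt_mul_self hK0]
  have hs2 : Real.sqrt 2 = (2:ℝ) ^ ((1:ℝ)/2) := by
    rw [Real.sqrt_eq_rpow]
  have h3 : (1:ℝ)/2 ≤ (2:ℝ) ^ (K/2-1) / Real.sqrt 2 := by
    rw [hs2, ← Real.rpow_sub (by norm_num)]
    have hexp : (-1:ℝ) ≤ K/2 - 1 - 1/2 := by linarith
    have : (2:ℝ) ^ (-1:ℝ) ≤ (2:ℝ) ^ (K/2-1-1/2) :=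
      Real.rpow_le_rpow_of_exponent_le (by norm_num) hexp
    rw [Real.rpow_neg_one] at this
    linarith
  have h4 : K / Real.sqrt 2 ≤ Real.sqrt (K*(n:ℝ)/2) := by
    rw [← h2]; exact h1
  have h5 : K/2 ≤ (2:ℝ) ^ (K/2-1) * Real.sqrt (K*(n:ℝ)/2) := by
    have hp : (0:ℝ) < (2:ℝ) ^ (K/2-1) := Real.rpow_pos_of_pos (by norm_num) _
    calc K/2 = K * (1/2) := by ring
      _ ≤ K * ((2:ℝ) ^ (K/2-1) / Real.sqrt 2) := mul_le_mul_of_nonneg_left h3 hK0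
      _ = (2:ℝ) ^ (K/2-1) * (K / Real.sqrt 2) := by ring
      _ ≤ (2:ℝ) ^ (K/2-1) * Real.sqrt (K*(n:ℝ)/2) :=
          mul_le_mul_of_nonneg_left h4 hp.le
  calc K * (d/2) = (K/2) * d := by ring
    _ ≤ ((2:ℝ) ^ (K/2-1) * Real.sqrt (K*(n:ℝ)/2)) * d :=
        mul_le_mul_of_nonneg_right h5 hd

end Aux

/-- Theorem 1, existence part: if
`b ∈ (2^{(n−m)/2−1} p(m,n) √(det A Aᵀ) · v + C) ∩ ℤ^m`, then `P(A, b)` contains an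
integer point. -/
theorem knapsack_feasible_in_translated_cone {m n : ℕ} (hm : 1 ≤ m) (hmn : m < n)
    (A : Matrix (Fin m) (Fin n) ℤ) (hgcd : minorGcd A = 1)
    (hpos : ∀ x : Fin n → ℝ, (∀ j, 0 ≤ x j) →
      (A.map (Int.cast : ℤ → ℝ)).mulVec x = 0 → x = 0)
    (b : Fin m → ℤ)
    (hb : (fun r => (b r : ℝ)) -
        ((2 : ℝ) ^ (((n : ℝ) - m) / 2 - 1) * Real.sqrt (((n : ℝ) - m) * n / 2) *
          Real.sqrt (((A * A.transpose).det : ℤ) : ℝ)) • colSum A ∈ colCone A) :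
    ∃ x : Fin n → ℤ, (∀ i, 0 ≤ x i) ∧ A.mulVec x = b := by
  classical
  set Ar : Matrix (Fin m) (Fin n) ℝ := A.map (Int.cast : ℤ → ℝ) with hAr
  set d : ℝ := Real.sqrt (((A * A.transpose).det : ℤ) : ℝ) with hd
  set t : ℝ := (2 : ℝ) ^ (((n : ℝ) - m) / 2 - 1) * Real.sqrt (((n : ℝ) - m) * n / 2) * d
    with ht
  have hd0 : 0 ≤ d := Real.sqrt_nonneg _
  -- cast of mulVec
  have hmulcast : ∀ x : Fin n → ℤ,
      Ar.mulVec (fun i => (x i : ℝ)) = fun r => ((A.mulVec x) r : ℝ) := by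
    intro x
    funext r
    simp only [Matrix.mulVec, dotProduct, hAr, Matrix.map_apply]
    push_cast
    rfl
  -- the real solution cvec
  obtain ⟨μ, hμ0, hμeq⟩ := hb
  set cvec : Fin n → ℝ := fun i => t + μ i with hcvec
  have hAc : Ar.mulVec cvec = fun r => (b r : ℝ) := by
    funext r
    have hr := congrFun hμeq r
    simp only [Pi.sub_apply, Pi.smul_apply, smul_eq_mul, Finset.sum_apply] at hr
    have hcs : colSum A r = ∑ i, (A r i : ℝ) := rfl
    rw [hcs] at hr
    simp only [Matrix.mulVec, dotProduct, hAr, Matrix.map_apply, hcvec]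
    have hsum : ∑ i, (A r i : ℝ) * (t + μ i)
        = t * (∑ i, (A r i:ℝ)) + ∑ i, μ i * (A r i:ℝ) := by
      rw [Finset.mul_sum, ← Finset.sum_add_distrib]
      exact Finset.sum_congr rfl fun i _ => by ring
    rw [hsum]
    linarith [hr]
  have hcvec_ge : ∀ i, t ≤ cvec i := fun i => by
    simp only [hcvec]; linarith [hμ0 i]
  -- integer solution
  obtain ⟨u, hu⟩ := exists_int_solution A hgcd b
  -- nonzero minor
  have hex : ∃ s : Finset (Fin n), ∃ h : s.card = m,
      (A.submatrix id fun j => ((s.orderIsoOfFin h) j : Fin n)).det ≠ 0 := by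
    by_contra hall
    push_neg at hall
    have h0 : minorGcd A = 0 := by
      rw [minorGcd]
      rw [Finset.gcd_eq_zero_iff]
      intro s hs
      rw [Finset.mem_filter] at hs
      rw [dif_pos hs.2]
      exact hall s hs.2
    rw [h0] at hgcd
    norm_num at hgcd
  obtain ⟨s, hs, hδne⟩ := hex
  set g : Fin m → Fin n := fun j => ((s.orderIsoOfFin hs) j : Fin n) with hgdef
  have hginj : Function.Injective g := fun a b h =>
    (s.orderIsoOfFin hs).injective (Subtype.ext h)
  have hgmem : ∀ i, g i ∈ s := fun i => ((s.orderIsoOfFin hs) i).2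
  have hrange : ∀ c ∈ s, ∃ i, g i = c := fun c hc =>
    ⟨(s.orderIsoOfFin hs).symm ⟨c, hc⟩,
      congrArg Subtype.val ((s.orderIsoOfFin hs).apply_symm_apply ⟨c, hc⟩)⟩
  have hnotrange : ∀ j ∈ sᶜ, j ∉ Set.range g := by
    intro j hj ⟨i, hi⟩
    rw [Finset.mem_compl] at hj
    exact hj (hi ▸ hgmem i)
  set δ : ℤ := (A.submatrix id g).det with hδdef
  -- determinant cast facts
  have hdetcast : (((A * A.transpose).det : ℤ) : ℝ) = (Ar * Ar.transpose).det := by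
    have e1 : (A * A.transpose).map ⇑(Int.castRingHom ℝ) = Ar * Ar.transpose := by
      ext i j
      simp only [Matrix.map_apply, Matrix.mul_apply, Matrix.transpose_apply, hAr]
      show ((∑ x : Fin n, A i x * A j x : ℤ) : ℝ) = ∑ x : Fin n, (A i x : ℝ) * (A j x : ℝ)
      push_cast
      rfl
    have h1 := RingHom.map_det (Int.castRingHom ℝ) (A * A.transpose)
    rw [RingHom.mapMatrix_apply, e1] at h1
    simpa using h1
  have hsubcast : ∀ h : Fin m → Fin n,
      ((A.submatrix id h).det : ℝ) = (Ar.submatrix id h).det := by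
    intro h
    have e1 : (A.submatrix id h).map ⇑(Int.castRingHom ℝ) = Ar.submatrix id h := by
      ext i j
      simp [Matrix.map_apply, Matrix.submatrix_apply, hAr]
    have h1 := RingHom.map_det (Int.castRingHom ℝ) (A.submatrix id h)
    rw [RingHom.mapMatrix_apply, e1] at h1
    simpa using h1
  have hminor : ∀ h : Fin m → Fin n, Function.Injective h →
      |((A.submatrix id h).det : ℝ)| ≤ d := by
    intro h hinj
    have h2 := minor_sq_le_det_mul_transpose hmn.le Ar h hinj
    rw [hd, hdetcast]
    calc |((A.submatrix id h).det : ℝ)|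
        = Real.sqrt (((A.submatrix id h).det : ℝ)^2) := (Real.sqrt_sq_eq_abs _).symm
      _ ≤ Real.sqrt (Ar * Ar.transpose).det :=
          Real.sqrt_le_sqrt (by rw [hsubcast h]; exact h2)
  -- pieces
  set w : Fin n → ℝ := fun c => (u c : ℝ) - cvec c with hw
  set α : Fin n → ℝ := fun j => w j / (δ : ℝ) with hα
  set x : Fin n → ℤ := fun c => u c - ∑ j ∈ sᶜ, round (α j) * kerVec A g j c with hx
  have hVd : ∀ j ∈ sᶜ, ∀ c, |((kerVec A g j c : ℤ) : ℝ)| ≤ d := by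
    intro j hj c
    rcases kerVec_cases A hginj (hnotrange j hj) c with h0 | ⟨h, hinj, he | he⟩
    · rw [h0]; simpa using hd0
    · rw [he]; exact hminor h hinj
    · rw [he]; rw [Int.cast_neg, abs_neg]; exact hminor h hinj
  -- A x = b
  refine ⟨x, ?_, ?_⟩
  swap
  · have hxeq : x = u - ∑ j ∈ sᶜ, (round (α j)) • kerVec A g j := by
      funext c
      simp only [hx, Pi.sub_apply, Finset.sum_apply, Pi.smul_apply, smul_eq_mul]
    rw [hxeq]
    have : A.mulVecLin (u - ∑ j ∈ sᶜ, (round (α j)) • kerVec A g j) = b := by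
      rw [map_sub, map_sum]
      have hz : ∀ j ∈ sᶜ, A.mulVecLin ((round (α j)) • kerVec A g j) = 0 := by
        intro j hj
        rw [map_smul]
        have : A.mulVecLin (kerVec A g j) = 0 := by
          simpa [Matrix.mulVecLin_apply] using kerVec_mulVec A hginj (hnotrange j hj)
        rw [this, smul_zero]
      rw [Finset.sum_congr rfl hz]
      simpa [Matrix.mulVecLin_apply] using hu
    simpa [Matrix.mulVecLin_apply] using this
  -- z = 0
  · set z : Fin n → ℝ := fun c => w c - ∑ j ∈ sᶜ, α j * ((kerVec A g j c : ℤ) : ℝ) with hz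
    have hVjj : ∀ j ∈ sᶜ, kerVec A g j j = δ := fun j hj =>
      kerVec_apply_j0 A hginj (hnotrange j hj)
    have hVother : ∀ j ∈ sᶜ, ∀ c ∈ sᶜ, c ≠ j → kerVec A g j c = 0 := by
      intro j hj c hc hcj
      exact kerVec_apply_notmem A hcj (hnotrange c hc)
    have hzc : ∀ c ∈ sᶜ, z c = 0 := by
      intro c hc
      have hsum : ∑ j ∈ sᶜ, α j * ((kerVec A g j c : ℤ) : ℝ) = α c * (δ : ℝ) := by
        rw [Finset.sum_eq_single c]
        · rw [hVjj c hc]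
        · intro j hj hjc
          rw [hVother j hj c hc (by simpa using (Ne.symm hjc))]
          simp
        · intro h; exact absurd hc h
      rw [hz]
      show w c - ∑ j ∈ sᶜ, α j * ((kerVec A g j c : ℤ) : ℝ) = 0
      rw [hsum]; simp only [hα]
      field_simp
      ring
    have hwker : Ar.mulVec w = 0 := by
      have h1 : Ar.mulVec (fun i => (u i : ℝ)) = fun r => (b r : ℝ) := by
        rw [hmulcast u, hu]
      have : w = (fun i => (u i : ℝ)) - cvec := by funext i; simp [hw]
      rw [this, Matrix.mulVec_sub, h1, hAc, sub_self]
    have hzker : Ar.mulVec z = 0 := by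
      have hzeq : z = w - ∑ j ∈ sᶜ, α j • (fun c => ((kerVec A g j c : ℤ) : ℝ)) := by
        funext c
        simp only [hz, Pi.sub_apply, Finset.sum_apply, Pi.smul_apply, smul_eq_mul]
      have : Ar.mulVecLin z = 0 := by
        rw [hzeq, map_sub, map_sum]
        have hv0 : ∀ j ∈ sᶜ,
            Ar.mulVecLin (α j • (fun c => ((kerVec A g j c : ℤ) : ℝ))) = 0 := by
          intro j hj
          rw [map_smul]
          have : Ar.mulVecLin (fun c => ((kerVec A g j c : ℤ) : ℝ)) = 0 := by
            have := hmulcast (kerVec A g j)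
            rw [kerVec_mulVec A hginj (hnotrange j hj)] at this
            rw [Matrix.mulVecLin_apply, this]; funext r; simp
          rw [this, smul_zero]
        rw [Finset.sum_congr rfl hv0]
        simp only [Matrix.mulVecLin_apply, hwker]
        simp
      simpa [Matrix.mulVecLin_apply] using this
    -- conclude z = 0 everywhere
    have hδℝ : ((δ:ℤ):ℝ) ≠ 0 := Int.cast_ne_zero.2 hδne
    have hBdet : (Ar.submatrix id g).det = ((δ:ℤ):ℝ) := (hsubcast g).symm
    have hBz : (Ar.submatrix id g).mulVec (z ∘ g) = 0 := by
      funext r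
      have h0 := congrFun hzker r
      have hsplit : ∑ c ∈ s, Ar r c * z c + ∑ c ∈ sᶜ, Ar r c * z c
          = ∑ c, Ar r c * z c := Finset.sum_add_sum_compl s _
      have hcompl0 : ∑ c ∈ sᶜ, Ar r c * z c = 0 :=
        Finset.sum_eq_zero fun c hc => by rw [hzc c hc, mul_zero]
      have hmain : ∑ c ∈ s, Ar r c * z c = 0 := by
        have : (∑ c, Ar r c * z c) = 0 := h0
        linarith [hsplit, hcompl0, this]
      have hss : ∑ i : Fin m, Ar r (g i) * z (g i) = ∑ c ∈ s, Ar r c * z c := by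
        rw [← Finset.sum_coe_sort s (fun c => Ar r c * z c)]
        exact Equiv.sum_comp (s.orderIsoOfFin hs).toEquiv
          (fun (c : {y // y ∈ s}) => Ar r (c : Fin n) * z (c : Fin n))
      simp only [Matrix.mulVec, dotProduct, Matrix.submatrix_apply, id_eq,
        Function.comp_apply, Pi.zero_apply]
      rw [hss, hmain]
    have hzg0 : z ∘ g = 0 := by
      have hU : IsUnit (Ar.submatrix id g).det := by
        rw [hBdet]; exact isUnit_iff_ne_zero.2 hδℝ
      calc z ∘ g = (1 : Matrix (Fin m) (Fin m) ℝ).mulVec (z ∘ g) := by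
            rw [Matrix.one_mulVec]
        _ = ((Ar.submatrix id g)⁻¹ * (Ar.submatrix id g)).mulVec (z ∘ g) := by
            rw [Matrix.nonsing_inv_mul _ hU]
        _ = (Ar.submatrix id g)⁻¹.mulVec ((Ar.submatrix id g).mulVec (z ∘ g)) :=
            (Matrix.mulVec_mulVec _ _ _).symm
        _ = 0 := by rw [hBz, Matrix.mulVec_zero]
    have hzall : ∀ c, z c = 0 := by
      intro c
      by_cases hc : c ∈ s
      · obtain ⟨i, rfl⟩ := hrange c hc
        exact congrFun hzg0 i
      · exact hzc c (Finset.mem_compl.2 hc)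
    -- nonnegativity
    intro c
    have hkey : (x c : ℝ) = cvec c
        + ∑ j ∈ sᶜ, (α j - round (α j)) * ((kerVec A g j c : ℤ) : ℝ) := by
      have h0 : w c = ∑ j ∈ sᶜ, α j * ((kerVec A g j c : ℤ) : ℝ) := by
        have h1 := hzall c
        rw [hz] at h1
        simp only at h1
        linarith [h1]
      have hxc : (x c : ℝ)
          = (u c : ℝ) - ∑ j ∈ sᶜ, ((round (α j) : ℝ) * ((kerVec A g j c : ℤ) : ℝ)) := by
        rw [hx]
        push_cast
        rfl
      have huc : (u c : ℝ) = cvec c + w c := by rw [hw]; ring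
      rw [hxc, huc, h0]
      simp_rw [sub_mul]
      rw [Finset.sum_sub_distrib]
      ring
    have hbnd : |∑ j ∈ sᶜ, (α j - round (α j)) * ((kerVec A g j c : ℤ) : ℝ)|
        ≤ (sᶜ.card : ℝ) * ((1/2) * d) := by
      calc |∑ j ∈ sᶜ, (α j - round (α j)) * ((kerVec A g j c : ℤ) : ℝ)|
          ≤ ∑ j ∈ sᶜ, |(α j - round (α j)) * ((kerVec A g j c : ℤ) : ℝ)| :=
            Finset.abs_sum_le_sum_abs _ _
        _ ≤ ∑ _j ∈ sᶜ, ((1/2) * d) := by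
            apply Finset.sum_le_sum
            intro j hj
            rw [abs_mul]
            exact mul_le_mul (abs_sub_round _) (hVd j hj c) (abs_nonneg _) (by norm_num)
        _ = (sᶜ.card : ℝ) * ((1/2) * d) := by
            rw [Finset.sum_const, nsmul_eq_mul]
    have hcard : (sᶜ.card : ℝ) = (n:ℝ) - m := by
      rw [Finset.card_compl, hs]
      simp [Nat.cast_sub hmn.le]
    have htd : ((n:ℝ) - m) * ((1/2) * d) ≤ t := by
      have := numeric_ineq hm hmn d hd0
      rw [ht]
      linarith [this]
    have hfin : (0:ℝ) ≤ (x c : ℝ) := by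
      rw [hkey]
      have h1 := hcvec_ge c
      have h2 := neg_abs_le (∑ j ∈ sᶜ, (α j - round (α j)) * ((kerVec A g j c : ℤ) : ℝ))
      rw [hcard] at hbnd
      linarith
    exact_mod_cast hfin


end
end

section
/- Let L ⊂ ℤⁿ be a k-dimensional lattice. Then there exist linearly independent vectors x₁, …, x_k ∈ L with ‖x_i‖_∞ ≤ det(L) for all i, where ‖·‖_∞ is the maximum norm. -/
noncomputable section

open scoped BigOperators RealInnerProductSpace Pointwise

section CauchyBinet

open Finset Equiv Matrix

variable {R : Type*} [CommRing R] {k n : ℕ}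


private theorem cb_aux {A : Matrix (Fin k) (Fin n) R} {p : Fin k → Fin n}
    (H : ¬Function.Injective p) :
    (∑ σ : Perm (Fin k), ((Perm.sign σ : ℤ) : R) * ∏ x, A (σ x) (p x) * A x (p x)) = 0 := by
  obtain ⟨i, j, hpij, hij⟩ : ∃ i j, p i = p j ∧ i ≠ j := by
    rw [Function.Injective] at H
    push_neg at H
    exact H
  exact
    sum_involution (fun σ _ => σ * Equiv.swap i j)
      (fun σ _ => by
        have : (∏ x, A (σ x) (p x)) = ∏ x, A ((σ * Equiv.swap i j) x) (p x) :=
          Fintype.prod_equiv (swap i j) _ _ (by simp [Equiv.apply_swap_eq_self hpij])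
        simp [prod_mul_distrib, this, Perm.sign_swap hij, -Perm.sign_swap'])
      (fun σ _ _ => (not_congr Equiv.mul_swap_eq_iff).mpr hij) (fun _ _ => mem_univ _) fun σ _ =>
      Equiv.mul_swap_involutive i j σ

/-- The `k × k` minor of `A` given by a `k`-subset of columns. -/
private def cbMinor (A : Matrix (Fin k) (Fin n) R) (s : Finset (Fin n)) : R :=
  if h : s.card = k then (A.submatrix id (s.orderEmbOfFin h)).det else 0

private theorem cauchy_binet_self (A : Matrix (Fin k) (Fin n) R) :
    (A * Aᵀ).det = ∑ s ∈ univ.filter (fun s : Finset (Fin n) => s.card = k),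
      cbMinor A s ^ 2 := by
  classical
  set F : (Fin k → Fin n) → R := fun p => ∑ σ : Perm (Fin k),
      ((Perm.sign σ : ℤ) : R) * ∏ i, A (σ i) (p i) * A i (p i) with hF
  have step1 : (A * Aᵀ).det = ∑ p : Fin k → Fin n, F p := by
    rw [hF]
    simp only [det_apply', mul_apply, transpose_apply, prod_univ_sum, mul_sum,
      Fintype.piFinset_univ]
    rw [Finset.sum_comm]
  have step2 : ∑ p : Fin k → Fin n, F p
      = ∑ p ∈ univ.filter (fun p : Fin k → Fin n => Function.Injective p), F p :=
    (Finset.sum_subset (Finset.filter_subset _ Finset.univ)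
      (fun p _ hp => cb_aux (by simpa using hp))).symm
  have maps : ∀ p ∈ univ.filter (fun p : Fin k → Fin n => Function.Injective p),
      Finset.image p univ ∈ univ.filter (fun s : Finset (Fin n) => s.card = k) := by
    intro p hp
    simp only [mem_filter, mem_univ, true_and] at hp ⊢
    rw [Finset.card_image_of_injective _ hp, card_univ, Fintype.card_fin]
  rw [step1, step2, ← Finset.sum_fiberwise_of_maps_to maps F]
  refine Finset.sum_congr rfl (fun s hs => ?_)
  have h : s.card = k := by simpa using hs
  set e := s.orderEmbOfFin h with he
  have hmem : ∀ p : Fin k → Fin n, Finset.image p univ = s → ∀ x, p x ∈ s := by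
    intro p hp x
    rw [← hp]
    exact Finset.mem_image_of_mem p (mem_univ x)
  have inner : ∑ τ : Perm (Fin k), F (e ∘ τ)
      = ∑ p ∈ (univ.filter (fun p : Fin k → Fin n => Function.Injective p)).filter
          (fun p => Finset.image p univ = s), F p := by
    refine Finset.sum_bij' (i := fun τ _ => e ∘ τ)
      (j := fun p hp => Equiv.ofBijective
        (fun x => (s.orderIsoOfFin h).symm ⟨p x, hmem p (by simpa using (Finset.mem_filter.mp hp).2) x⟩)
        ?_) ?_ ?_ ?_ ?_ ?_
    · have hpinj : Function.Injective p := by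
        have := (Finset.mem_filter.mp hp).1
        simpa using this
      rw [← Finite.injective_iff_bijective]
      intro a b hab
      apply hpinj
      have := congrArg (fun z => ((s.orderIsoOfFin h) z : Fin n)) hab
      simpa using this
    · intro τ _
      simp only [Finset.mem_filter, Finset.mem_univ, true_and]
      constructor
      · exact (e.injective.comp τ.injective)
      · apply Finset.eq_of_subset_of_card_le
        · intro a ha
          obtain ⟨x, _, rfl⟩ := Finset.mem_image.mp ha
          exact Finset.orderEmbOfFin_mem s h (τ x)
        · rw [h, Finset.card_image_of_injective _ (e.injective.comp τ.injective),
            card_univ, Fintype.card_fin]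
    · intro p hp
      exact Finset.mem_univ _
    · intro τ _
      ext x
      have : (⟨e (τ x), Finset.orderEmbOfFin_mem s h (τ x)⟩ : {y // y ∈ s}) = (s.orderIsoOfFin h) (τ x) := by
        apply Subtype.ext
        simp [he, Finset.coe_orderIsoOfFin_apply]
      simp only [Equiv.ofBijective_apply, Function.comp_apply]
      rw [this]
      simp
    · intro p hp
      funext x
      simp only [Equiv.ofBijective_apply, Function.comp_apply, he]
      rw [← Finset.coe_orderIsoOfFin_apply, OrderIso.apply_symm_apply]
    · intro τ _
      rfl
  rw [← inner]
  -- per-subset computation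
  set M := A.submatrix id e with hM
  have hτval : ∀ τ : Perm (Fin k), F (e ∘ τ)
      = (∏ i, M i (τ i)) * (((Perm.sign τ : ℤ) : R) * M.det) := by
    intro τ
    have hsplit : ∀ σ : Perm (Fin k),
        (∏ i, A (σ i) ((e ∘ τ) i) * A i ((e ∘ τ) i))
        = (∏ i, M (σ i) (τ i)) * ∏ i, M i (τ i) := by
      intro σ
      rw [← prod_mul_distrib]
      rfl
    have : F (e ∘ τ) = (∑ σ : Perm (Fin k), ((Perm.sign σ : ℤ) : R) * ∏ i, M (σ i) (τ i))
        * ∏ i, M i (τ i) := by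
      rw [hF, Finset.sum_mul]
      exact Finset.sum_congr rfl fun σ _ => by rw [hsplit σ]; ring
    rw [this]
    have hdet : (∑ σ : Perm (Fin k), ((Perm.sign σ : ℤ) : R) * ∏ i, M (σ i) (τ i))
        = (M.submatrix id τ).det := by
      rw [det_apply']
      rfl
    rw [hdet, det_permute']
    ring
  rw [Finset.sum_congr rfl (fun τ _ => hτval τ)]
  have : ∑ τ : Perm (Fin k), (∏ i, M i (τ i)) * (((Perm.sign τ : ℤ) : R) * M.det)
      = M.det * Mᵀ.det := by
    rw [det_apply' Mᵀ, Finset.mul_sum]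
    exact Finset.sum_congr rfl fun τ _ => by
      simp only [transpose_apply]
      ring
  rw [this, det_transpose, ← pow_two]
  have : cbMinor A s = M.det := by
    rw [cbMinor, dif_pos h]
  rw [this]

private theorem sq_det_submatrix_le {S : Type*} [CommRing S] [LinearOrder S] [IsStrictOrderedRing S] {k n : ℕ}
    (A : Matrix (Fin k) (Fin n) S) (c : Fin k → Fin n) :
    (A.submatrix id c).det ^ 2 ≤ (A * Aᵀ).det := by
  classical
  rw [cauchy_binet_self]
  by_cases hc : Function.Injective c
  · set s := Finset.image c univ with hsdef
    have h : s.card = k := by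
      rw [hsdef, Finset.card_image_of_injective _ hc, card_univ, Fintype.card_fin]
    have hmem : ∀ x, c x ∈ s := fun x => Finset.mem_image_of_mem c (mem_univ x)
    set τ : Perm (Fin k) := Equiv.ofBijective
        (fun x => (s.orderIsoOfFin h).symm ⟨c x, hmem x⟩)
        (by
          rw [← Finite.injective_iff_bijective]
          intro a b hab
          apply hc
          have := congrArg (fun z => ((s.orderIsoOfFin h) z : Fin n)) hab
          simpa using this) with hτ
    have hce : c = (s.orderEmbOfFin h) ∘ τ := by
      funext x
      simp only [Function.comp_apply, hτ, Equiv.ofBijective_apply]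
      rw [← Finset.coe_orderIsoOfFin_apply, OrderIso.apply_symm_apply]
    have hsub : A.submatrix id c = (A.submatrix id (s.orderEmbOfFin h)).submatrix id τ := by
      rw [hce]
      rfl
    have hsq : (A.submatrix id c).det ^ 2 = cbMinor A s ^ 2 := by
      rw [hsub, det_permute', cbMinor, dif_pos h, mul_pow]
      rcases Int.units_eq_one_or (Perm.sign τ) with h1 | h1 <;> rw [h1] <;> norm_num
    rw [hsq]
    exact Finset.single_le_sum (fun t _ => sq_nonneg (cbMinor A t)) (by simp [h])
  · have hz : (A.submatrix id c).det = 0 := by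
      obtain ⟨a, b, hab, hne⟩ : ∃ a b, c a = c b ∧ a ≠ b := by
        rw [Function.Injective] at hc
        push_neg at hc
        exact hc
      exact det_zero_of_column_eq hne (fun x => by simp [submatrix_apply, hab])
    rw [hz]
    norm_num
    exact Finset.sum_nonneg fun t _ => sq_nonneg _

end CauchyBinet

open Matrix Finset Module Submodule in
/-- a `k`-dimensional lattice `L ⊂ ℤⁿ` contains `k` linearly independent
vectors with `‖x_i‖_∞ ≤ det(L)`. -/
theorem exists_linearIndependent_sup_norm_le_det {n k : ℕ}
    (b : Fin k → EuclideanSpace ℝ (Fin n)) (hb : LinearIndependent ℝ b)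
    (hint : ∀ i, IsIntegerVec (b i)) :
    ∃ x : Fin k → EuclideanSpace ℝ (Fin n), LinearIndependent ℝ x ∧
      (∀ i, x i ∈ Submodule.span ℤ (Set.range b)) ∧
      ∀ i j, |x i j| ≤ latticeDet b := by
  classical
  choose Bf hB using hint
  set B : Matrix (Fin k) (Fin n) ℤ := Matrix.of Bf with hBdef
  set BR : Matrix (Fin k) (Fin n) ℝ := B.map (Int.cast : ℤ → ℝ) with hBRdef
  have hBapp : ∀ i j, b i j = (B i j : ℝ) := hB
  set eqL : EuclideanSpace ℝ (Fin n) ≃ₗ[ℝ] (Fin n → ℝ) :=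
    WithLp.linearEquiv 2 ℝ (Fin n → ℝ) with heqL
  have heqLb : ∀ i, eqL (b i) = BR i := by
    intro i
    funext j
    simp only [heqL, WithLp.linearEquiv_apply, WithLp.coe_linearEquiv, hBRdef,
      Matrix.map_apply]
    exact hBapp i j
  have hrow : LinearIndependent ℝ (fun i => BR i) := by
    have h1 := hb.map' eqL.toLinearMap eqL.ker
    have h2 : (fun i => BR i) = eqL.toLinearMap ∘ b := by
      funext i
      exact (heqLb i).symm
    rw [h2]
    exact h1
  have hinj : Function.Injective BR.vecMul := Matrix.vecMul_injective_iff.mpr hrow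
  have hinjL : Function.Injective BR.vecMulLinear := by
    rw [Matrix.coe_vecMulLinear]
    exact hinj
  -- the columns of `BR` span `ℝ^k`
  have hcolspan : Submodule.span ℝ (Set.range BRᵀ) = ⊤ := by
    rw [show Set.range BRᵀ = Set.range BR.col from rfl, ← Matrix.range_mulVecLin]
    apply Submodule.eq_top_of_finrank_eq
    have h2 : finrank ℝ (LinearMap.range BR.mulVecLin) = BR.rank := rfl
    rw [h2, ← Matrix.rank_transpose, Matrix.rank, Matrix.mulVecLin_transpose,
      LinearMap.finrank_range_of_inj hinjL]
  obtain ⟨t, hts, htspan, htind⟩ := exists_linearIndependent ℝ (Set.range BRᵀ)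
  rw [hcolspan] at htspan
  have htfin : t.Finite := Set.Finite.subset (Set.finite_range _) hts
  haveI := htfin.fintype
  have hbasis : Basis t ℝ (Fin k → ℝ) := Basis.mk htind (by rw [Subtype.range_coe, htspan])
  have hcard : Fintype.card t = k := by
    have h3 := Module.finrank_eq_card_basis hbasis
    simpa using h3.symm
  have equivt : Fin k ≃ t := (Fintype.equivFinOfCardEq hcard).symm
  have hpre : ∀ y : t, ∃ j : Fin n, BRᵀ j = y.1 := fun y => hts y.2
  choose g hg using hpre
  set c : Fin k → Fin n := fun i => g (equivt i) with hc
  have hcind : LinearIndependent ℝ (fun i : Fin k => (BR.submatrix id c)ᵀ i) := by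
    have h4 : (fun i : Fin k => (BR.submatrix id c)ᵀ i)
        = fun i => (equivt i).1 := by
      funext i
      rw [← hg (equivt i)]
      rfl
    rw [h4]
    exact htind.comp (fun i => equivt i) equivt.injective
  have hNunit : IsUnit (BR.submatrix id c) := Matrix.linearIndependent_cols_iff_isUnit.mp hcind
  have hdetNR : (BR.submatrix id c).det ≠ 0 :=
    ((Matrix.isUnit_iff_isUnit_det _).mp hNunit).ne_zero
  set N : Matrix (Fin k) (Fin k) ℤ := B.submatrix id c with hNdef
  have hNmap : N.map (Int.cast : ℤ → ℝ) = BR.submatrix id c := rfl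
  have hdetNZ : ((N.det : ℤ) : ℝ) ≠ 0 := by
    have h' : ((N.det : ℤ) : ℝ) = (BR.submatrix id c).det := by
      rw [show ((N.det : ℤ) : ℝ) = (Int.castRingHom ℝ) N.det from rfl,
        RingHom.map_det]
      rfl
    rw [h']
    exact hdetNR
  set X : Matrix (Fin k) (Fin n) ℤ := N.adjugate * B with hXdef
  set AR : Matrix (Fin k) (Fin k) ℝ := N.adjugate.map (Int.cast : ℤ → ℝ) with hARdef
  have hAunit : IsUnit AR := by
    rw [Matrix.isUnit_iff_isUnit_det]
    have h5 : AR.det = ((N.adjugate.det : ℤ) : ℝ) := by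
      rw [show ((N.adjugate.det : ℤ) : ℝ) = (Int.castRingHom ℝ) N.adjugate.det from rfl,
        RingHom.map_det]
      rfl
    rw [h5, Matrix.det_adjugate]
    push_cast
    apply IsUnit.pow
    exact isUnit_iff_ne_zero.mpr (by rwa [Int.cast_det] at hdetNZ)
  have hXmap : X.map (Int.cast : ℤ → ℝ) = AR * BR := by
    rw [hXdef]
    ext i j
    simp [Matrix.mul_apply, hARdef, hBRdef, Matrix.map_apply]
  set x : Fin k → EuclideanSpace ℝ (Fin n) := fun i => toE (fun j => ((X i j : ℤ) : ℝ))
    with hxdef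
  have hxeq : ∀ i, x i = eqL.symm ((AR * BR) i) := by
    intro i
    rw [← hXmap]
    rfl
  refine ⟨x, ?_, ?_, ?_⟩
  · -- linear independence
    have hrowsA : LinearIndependent ℝ (fun i => AR i) :=
      Matrix.linearIndependent_rows_iff_isUnit.mpr hAunit
    have hmap := hrowsA.map' BR.vecMulLinear (LinearMap.ker_eq_bot.mpr hinjL)
    have hXrows : LinearIndependent ℝ (fun i => (AR * BR) i) := by
      have h6 : (fun i => (AR * BR) i) = BR.vecMulLinear ∘ fun i => AR i := by
        funext i
        funext j
        simp [Matrix.mul_apply, Matrix.vecMul, dotProduct]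
      rw [h6]
      exact hmap
    have h7 := hXrows.map' eqL.symm.toLinearMap eqL.symm.ker
    have h8 : x = eqL.symm.toLinearMap ∘ fun i => (AR * BR) i := by
      funext i
      exact hxeq i
    rw [h8]
    exact h7
  · -- membership in the ℤ-span
    intro i
    have h9 : x i = ∑ l : Fin k, N.adjugate i l • b l := by
      apply eqL.injective
      rw [map_sum]
      funext j
      have h10 : eqL (x i) j = ((X i j : ℤ) : ℝ) := by
        rw [hxeq i]
        simp only [LinearEquiv.apply_symm_apply]
        rw [← hXmap]
        simp [Matrix.map_apply]
      rw [h10]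
      have h11 : ∀ l : Fin k, eqL (N.adjugate i l • b l) = N.adjugate i l • (BR l) := by
        intro l
        rw [map_zsmul, heqLb]
      rw [Finset.sum_congr rfl fun l _ => h11 l]
      rw [Finset.sum_apply]
      simp only [Pi.smul_apply, zsmul_eq_mul]
      rw [hXdef]
      push_cast [Matrix.mul_apply]
      rfl
    rw [h9]
    exact Submodule.sum_mem _ fun l _ =>
      Submodule.smul_mem _ _ (Submodule.subset_span ⟨l, rfl⟩)
  · -- the sup-norm bound
    intro i j
    have hlat : latticeDet b = Real.sqrt (((B * Bᵀ).det : ℤ) : ℝ) := by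
      rw [latticeDet]
      congr 1
      have h12 : (Matrix.of fun i j : Fin k => (⟪b i, b j⟫ : ℝ))
          = (B * Bᵀ).map (Int.castRingHom ℝ) := by
        ext a d
        simp only [Matrix.of_apply, Matrix.map_apply, Matrix.mul_apply,
          Matrix.transpose_apply]
        rw [PiLp.inner_apply]
        simp only [RCLike.inner_apply, conj_trivial, Int.coe_castRingHom]
        push_cast
        refine Finset.sum_congr rfl fun u _ => ?_
        rw [hBapp a u, hBapp d u, mul_comm]
      rw [h12]
      exact (RingHom.map_det (Int.castRingHom ℝ) (B * Bᵀ)).symm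
    have key : (X i j) ^ 2 ≤ (B * Bᵀ).det := by
      have h13 : X i j = (B.submatrix id (Function.update c i j)).det := by
        have h14 : X i j = Matrix.cramer N (fun l => B l j) i := by
          rw [Matrix.cramer_eq_adjugate_mulVec]
          simp [hXdef, Matrix.mul_apply, Matrix.mulVec, dotProduct]
        rw [h14, Matrix.cramer_apply]
        congr 1
        ext a d
        rw [Matrix.updateCol_apply, Matrix.submatrix_apply, Function.update_apply]
        split_ifs <;> rfl
      rw [h13]
      exact sq_det_submatrix_le B _
    have hxij : x i j = ((X i j : ℤ) : ℝ) := rfl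
    rw [hxij, hlat, ← Real.sqrt_sq_eq_abs]
    apply Real.sqrt_le_sqrt
    exact_mod_cast key


end
end
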